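/- arXiv:2206.05421 — 4 statements merged into one kernel-verified Lean document; each statement's English description precedes it below -/
import Mathlib

section
/- Let G be a DAG and let H be obtained from G by reversing a single directed edge i → j. Then H is a DAG with the same d-separation statements as G (i.e., H ∈ MEC(G)) if and only if i → j is a covered edge in G, i.e., Pa(i, G) = Pa(j, G) \ {i}. -/
open Classical
attribute [local instance] Classical.propDecidable

variable {V : Type} [Fintype V] [DecidableEq V]

/-- A conditional independence model over variable set `V`:
`I A B C` means `A` is independent of `B` given `C`. -/
abbrev IndepModel (V : Type) :=
  Finset V → Finset V → Finset V → Prop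

/-- Semigraphoid axioms. -/
structure Semigraphoid (I : IndepModel V) : Prop where
  symm : ∀ A B C, I A B C → I B A C
  decomposition : ∀ A B W C, I A (B ∪ W) C → I A B C ∧ I A W C
  weakUnion : ∀ A B W C, I A (B ∪ W) C → I A B (C ∪ W)
  contraction : ∀ A B W C, I A B C → I A W (C ∪ B) → I A (B ∪ W) C

/-- Graphoid axioms. -/
structure Graphoid (I : IndepModel V) extends Semigraphoid I : Prop where
  intersection : ∀ A B W C, I A B (C ∪ W) → I A W (C ∪ B) → I A (B ∪ W) C

/-- Compositional graphoid axioms. -/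
structure CompGraphoid (I : IndepModel V) extends Graphoid I : Prop where
  composition : ∀ A B W C, I A B C → I A W C → I A (B ∪ W) C

/-- `M` is a Markov blanket of `X` relative to `Z`. -/
def MarkovBlanket (I : IndepModel V) (X : V) (Z M : Finset V) : Prop :=
  M ⊆ Z ∧ I {X} (Z \ M) M

/-- `M` is a Markov boundary (minimal Markov blanket) of `X` relative to `Z`. -/
def MarkovBoundary (I : IndepModel V) (X : V) (Z M : Finset V) : Prop :=
  MarkovBlanket I X Z M ∧ ∀ M' ⊂ M, ¬ I {X} (Z \ M') M'

/-- A directed graph on `V`, given by its finite set of directed edges. -/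
abbrev EdgeSet (V : Type) := Finset (V × V)

def Adj (E : EdgeSet V) (a b : V) : Prop := (a, b) ∈ E

/-- Acyclicity: no vertex reaches itself by a nontrivial directed path. -/
def IsDAG (E : EdgeSet V) : Prop := ∀ v, ¬ Relation.TransGen (Adj E) v v

def parents (E : EdgeSet V) (v : V) : Finset V :=
  (E.filter (fun e => e.2 = v)).image Prod.fst

def IsCollider (E : EdgeSet V) (x y z : V) : Prop := Adj E x y ∧ Adj E z y

/-- The middle vertex `y` of a path triple `x - y - z` does not block the path
given conditioning set `C`. -/
def ActiveTriple (E : EdgeSet V) (C : Finset V) (x y z : V) : Prop :=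
  (IsCollider E x y z ∧ ∃ d ∈ C, Relation.ReflTransGen (Adj E) y d) ∨
  (¬ IsCollider E x y z ∧ y ∉ C)

/-- `a` and `b` are d-connected given `C` in the graph `E`. -/
def DConn (E : EdgeSet V) (C : Finset V) (a b : V) : Prop :=
  ∃ p : List V, 2 ≤ p.length ∧ p.head? = some a ∧ p.getLast? = some b ∧
    (∀ (i : ℕ) (h : i + 1 < p.length),
      Adj E (p.get ⟨i, by omega⟩) (p.get ⟨i + 1, h⟩) ∨
      Adj E (p.get ⟨i + 1, h⟩) (p.get ⟨i, by omega⟩)) ∧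
    (∀ (i : ℕ) (h : i + 2 < p.length),
      ActiveTriple E C (p.get ⟨i, by omega⟩) (p.get ⟨i + 1, by omega⟩) (p.get ⟨i + 2, h⟩))

/-- `A` and `B` are d-separated given `C`. -/
def DSep (E : EdgeSet V) (A B C : Finset V) : Prop :=
  ∀ a ∈ A, ∀ b ∈ B, ¬ DConn E C a b

def PairwiseDisjoint3 (A B C : Finset V) : Prop :=
  Disjoint A B ∧ Disjoint A C ∧ Disjoint B C

/-- `I(G) ⊆ I(P)`: every d-separation of the graph is an independence of `I`. -/
def Markovian (E : EdgeSet V) (I : IndepModel V) : Prop :=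
  ∀ A B C, PairwiseDisjoint3 A B C → DSep E A B C → I A B C

/-- `I(P) ⊆ I(G)`: every independence of `I` is a d-separation of the graph. -/
def FaithfulTo (E : EdgeSet V) (I : IndepModel V) : Prop :=
  ∀ A B C, PairwiseDisjoint3 A B C → I A B C → DSep E A B C

/-- `I(E) ⊆ I(E')` : every d-separation statement of `E` holds in `E'`. -/
def ISub (E E' : EdgeSet V) : Prop :=
  ∀ A B C, PairwiseDisjoint3 A B C → DSep E A B C → DSep E' A B C

/-- Markov equivalence: same d-separation statements. -/
def MEquiv (E E' : EdgeSet V) : Prop := ISub E E' ∧ ISub E' E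

/-- Markovian DAGs. -/
def CMC (I : IndepModel V) : Set (EdgeSet V) := {G | IsDAG G ∧ Markovian G I}

/-- Faithful DAGs. -/
def CFC (I : IndepModel V) : Set (EdgeSet V) := {G | G ∈ CMC I ∧ FaithfulTo G I}

/-- SGS-minimal DAGs: Markovian with no Markovian proper subgraph. -/
def SGSmin (I : IndepModel V) : Set (EdgeSet V) :=
  {G | G ∈ CMC I ∧ ∀ G' ⊆ G, G' ∈ CMC I → G' = G}

/-- Frugal DAGs: Markovian with minimal edge count. -/
def Fr (I : IndepModel V) : Set (EdgeSet V) :=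
  {G | G ∈ CMC I ∧ ∀ G' ∈ CMC I, G.card ≤ G'.card}

/-- Uniquely frugal DAGs. -/
def uFr (I : IndepModel V) : Set (EdgeSet V) :=
  {G | G ∈ Fr I ∧ ∀ G' ∈ Fr I, MEquiv G' G}

/-- P-minimal DAGs: Markovian `G` such that no Markovian `G'` has `I(G) ⊊ I(G')`. -/
def Pm (I : IndepModel V) : Set (EdgeSet V) :=
  {G | G ∈ CMC I ∧ ∀ G' ∈ CMC I, ISub G G' → ISub G' G}

/-- Uniquely P-minimal DAGs. -/
def uPm (I : IndepModel V) : Set (EdgeSet V) :=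
  {G | G ∈ Pm I ∧ ∀ G' ∈ Pm I, MEquiv G' G}

/-- A list is a permutation of the vertices of `V`. -/
def IsPermList (π : List V) : Prop := π.Nodup ∧ ∀ v : V, v ∈ π

/-- The set of vertices preceding `k` in the permutation `π`. -/
def pre (π : List V) (k : V) : Finset V := (π.takeWhile (fun x => x != k)).toFinset

/-- The DAG induced from a permutation `π` by the Raskutti–Uhler (RU) construction:
`j → k` is an edge iff `j` precedes `k` in `π` and `X_j` is dependent on `X_k`
given all other predecessors of `k`. -/
noncomputable def RUedges (I : IndepModel V) (π : List V) : EdgeSet V :=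
  Finset.univ.filter
    (fun e => e.1 ∈ pre π e.2 ∧ ¬ I {e.1} {e.2} ((pre π e.2).erase e.1))

/-- `j → k` is a covered edge of `E`. -/
def CoveredEdge (E : EdgeSet V) (j k : V) : Prop :=
  (j, k) ∈ E ∧ parents E j = (parents E k).erase j

/-- `j → k` is a singular edge of `E`: no directed path from `j` to `k` other than
the edge itself. -/
def SingularEdge (E : EdgeSet V) (j k : V) : Prop :=
  (j, k) ∈ E ∧
    ∀ i, Relation.TransGen (Adj E) j i → Relation.TransGen (Adj E) i k → i = j ∨ i = k

/-- `π` is a causal order of the graph `E`: every ancestor of a vertex precedes it. -/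
def CausalOrder (E : EdgeSet V) (π : List V) : Prop :=
  IsPermList π ∧ ∀ a b, Relation.TransGen (Adj E) a b → π.idxOf a < π.idxOf b

/-- Two permutations differ by one adjacent transposition. -/
def AdjTrans (π τ : List V) : Prop :=
  ∃ (δ₁ δ₂ : List V) (a b : V), π = δ₁ ++ a :: b :: δ₂ ∧ τ = δ₁ ++ b :: a :: δ₂

/-- The non-descendants of `j` in the graph `E`. -/
noncomputable def nonDesc (E : EdgeSet V) (j : V) : Finset V :=
  Finset.univ.filter (fun i => ¬ Relation.ReflTransGen (Adj E) j i)

namespace CoveredRev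

variable {V : Type} [Fintype V] [DecidableEq V]

lemma adj_irrefl {E : EdgeSet V} (hE : IsDAG E) (v : V) : ¬ Adj E v v :=
  fun h => hE v (Relation.TransGen.single h)

lemma adj_asymm {E : EdgeSet V} (hE : IsDAG E) {u v : V} (h1 : Adj E u v) (h2 : Adj E v u) :
    False :=
  hE u (Relation.TransGen.head h1 (Relation.TransGen.single h2))

lemma mem_parents {E : EdgeSet V} {x v : V} : x ∈ parents E v ↔ (x, v) ∈ E := by
  constructor
  · intro h
    simp only [parents, Finset.mem_image, Finset.mem_filter] at h
    obtain ⟨⟨p, q⟩, ⟨hmem, hq⟩, hp⟩ := h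
    cases hp; cases hq; exact hmem
  · intro h
    simp only [parents, Finset.mem_image, Finset.mem_filter]
    exact ⟨(x, v), ⟨h, rfl⟩, rfl⟩

/-- Active walks with at least one edge.  `d` is the direction of the first
edge (`true` = out of the start vertex).  `coll` is the collider activation
condition. -/
inductive AWalk (E : EdgeSet V) (C : Finset V) (coll : V → Prop) : ℕ → Bool → V → V → Prop
  | out_single {a b : V} : Adj E a b → AWalk E C coll 1 true a b
  | in_single {a b : V} : Adj E b a → AWalk E C coll 1 false a b
  | out_cons {a x b : V} {n : ℕ} {dx : Bool} : Adj E a x → AWalk E C coll n dx x b →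
      (if dx then x ∉ C else coll x) → AWalk E C coll (n + 1) true a b
  | in_cons {a x b : V} {n : ℕ} {dx : Bool} : Adj E x a → AWalk E C coll n dx x b →
      x ∉ C → AWalk E C coll (n + 1) false a b

/-- collider condition for genuine d-connection -/
def desc (E : EdgeSet V) (C : Finset V) (x : V) : Prop :=
  ∃ d ∈ C, Relation.ReflTransGen (Adj E) x d

/-- collider condition for normalized walks -/
def inC (C : Finset V) (x : V) : Prop := x ∈ C

lemma AWalk.mono {E : EdgeSet V} {C : Finset V} {coll coll' : V → Prop}
    (hcc : ∀ x, coll x → coll' x) {n : ℕ} {d : Bool} {a b : V}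
    (h : AWalk E C coll n d a b) : AWalk E C coll' n d a b := by
  induction h with
  | out_single h => exact AWalk.out_single h
  | in_single h => exact AWalk.in_single h
  | out_cons h1 h2 h3 ih =>
      refine AWalk.out_cons h1 ih ?_
      cases hdx : ‹Bool› <;> simp_all
  | in_cons h1 h2 h3 ih => exact AWalk.in_cons h1 ih h3

end CoveredRev
namespace CoveredRev
set_option linter.unusedSectionVars false

variable {V : Type} [Fintype V] [DecidableEq V]

def chainAdj (E : EdgeSet V) (p : List V) : Prop :=
  ∀ (i : ℕ) (h : i + 1 < p.length),
      Adj E (p.get ⟨i, by omega⟩) (p.get ⟨i + 1, h⟩) ∨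
      Adj E (p.get ⟨i + 1, h⟩) (p.get ⟨i, by omega⟩)

def chainTri (E : EdgeSet V) (C : Finset V) (p : List V) : Prop :=
  ∀ (i : ℕ) (h : i + 2 < p.length),
      ActiveTriple E C (p.get ⟨i, by omega⟩) (p.get ⟨i + 1, by omega⟩) (p.get ⟨i + 2, h⟩)

lemma chainAdj_pair {E : EdgeSet V} {a x : V} (h : Adj E a x ∨ Adj E x a) :
    chainAdj E [a, x] := by
  intro i hi
  simp only [List.length_cons, List.length_nil] at hi
  match i with
  | 0 => exact h
  | (i' + 1) => omega

lemma chainTri_pair {E : EdgeSet V} {C : Finset V} {a x : V} : chainTri E C [a, x] := by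
  intro i hi
  simp only [List.length] at hi
  omega

lemma chainAdj_cons {E : EdgeSet V} {a x : V} {q : List V}
    (h : chainAdj E (x :: q)) (hax : Adj E a x ∨ Adj E x a) :
    chainAdj E (a :: x :: q) := by
  intro i hi
  match i with
  | 0 => exact hax
  | (i' + 1) => exact h i' (by simpa [List.length] using hi)

lemma chainTri_cons {E : EdgeSet V} {C : Finset V} {a x z : V} {zs : List V}
    (h : chainTri E C (x :: z :: zs)) (htri : ActiveTriple E C a x z) :
    chainTri E C (a :: x :: z :: zs) := by
  intro i hi
  match i with
  | 0 => exact htri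
  | (i' + 1) => exact h i' (by simpa [List.length] using hi)

lemma chainAdj_tail {E : EdgeSet V} {a : V} {q : List V} (h : chainAdj E (a :: q)) :
    chainAdj E q := by
  intro i hi
  exact h (i + 1) (by simp only [List.length_cons]; omega)

lemma chainTri_tail {E : EdgeSet V} {C : Finset V} {a : V} {q : List V}
    (h : chainTri E C (a :: q)) : chainTri E C q := by
  intro i hi
  exact h (i + 1) (by simp only [List.length_cons]; omega)

/-- Activity of a triple with known edge directions, for a DAG. -/
lemma activeTriple_out_out {E : EdgeSet V} {C : Finset V} (hE : IsDAG E) {a x z : V}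
    (h1 : Adj E a x) (h2 : Adj E x z) : ActiveTriple E C a x z ↔ x ∉ C := by
  have hc : ¬ IsCollider E a x z := fun hcol => adj_asymm hE h2 hcol.2
  unfold ActiveTriple
  constructor
  · rintro (⟨hcol, _⟩ | ⟨_, hx⟩)
    · exact absurd hcol hc
    · exact hx
  · intro hx; exact Or.inr ⟨hc, hx⟩

lemma activeTriple_out_in {E : EdgeSet V} {C : Finset V} (hE : IsDAG E) {a x z : V}
    (h1 : Adj E a x) (h2 : Adj E z x) :
    ActiveTriple E C a x z ↔ desc E C x := by
  have hc : IsCollider E a x z := ⟨h1, h2⟩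
  unfold ActiveTriple desc
  constructor
  · rintro (⟨_, hd⟩ | ⟨hncol, _⟩)
    · exact hd
    · exact absurd hc hncol
  · intro hd; exact Or.inl ⟨hc, hd⟩

lemma activeTriple_in {E : EdgeSet V} {C : Finset V} (hE : IsDAG E) {a x z : V}
    (h1 : Adj E x a) : ActiveTriple E C a x z ↔ x ∉ C := by
  have hc : ¬ IsCollider E a x z := fun hcol => adj_asymm hE h1 hcol.1
  unfold ActiveTriple
  constructor
  · rintro (⟨hcol, _⟩ | ⟨_, hx⟩)
    · exact absurd hcol hc
    · exact hx
  · intro hx; exact Or.inr ⟨hc, hx⟩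

end CoveredRev
namespace CoveredRev
set_option linter.unusedSectionVars false

variable {V : Type} [Fintype V] [DecidableEq V]

lemma walkToList {E : EdgeSet V} (hE : IsDAG E) {C : Finset V} {n : ℕ} {d : Bool} {a b : V}
    (h : AWalk E C (desc E C) n d a b) :
    ∃ x q, chainAdj E (a :: x :: q) ∧ chainTri E C (a :: x :: q) ∧
      (a :: x :: q).getLast? = some b ∧ (if d then Adj E a x else Adj E x a) := by
  induction h with
  | @out_single a b h =>
      exact ⟨b, [], chainAdj_pair (Or.inl h), chainTri_pair, by simp, by simp [h]⟩
  | @in_single a b h =>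
      exact ⟨b, [], chainAdj_pair (Or.inr h), chainTri_pair, by simp, by simp [h]⟩
  | @out_cons a x0 b n dx h1 tl cond ih =>
      obtain ⟨y, q, c1, c2, hl, hd⟩ := ih
      have tri : ActiveTriple E C a x0 y := by
        cases dx with
        | true => exact (activeTriple_out_out hE h1 hd).mpr cond
        | false => exact (activeTriple_out_in hE h1 hd).mpr cond
      exact ⟨x0, y :: q, chainAdj_cons c1 (Or.inl h1), chainTri_cons c2 tri,
        by rw [List.getLast?_cons_cons]; exact hl, by simp [h1]⟩
  | @in_cons a x0 b n dx h1 tl hxC ih =>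
      obtain ⟨y, q, c1, c2, hl, hd⟩ := ih
      have tri : ActiveTriple E C a x0 y := (activeTriple_in hE h1).mpr hxC
      exact ⟨x0, y :: q, chainAdj_cons c1 (Or.inr h1), chainTri_cons c2 tri,
        by rw [List.getLast?_cons_cons]; exact hl, by simp [h1]⟩

lemma listToWalk {E : EdgeSet V} (hE : IsDAG E) (C : Finset V) (b : V) :
    ∀ (q : List V) (a x : V), chainAdj E (a :: x :: q) → chainTri E C (a :: x :: q) →
      (a :: x :: q).getLast? = some b →
      ∃ d, AWalk E C (desc E C) (q.length + 1) d a b ∧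
        (if d then Adj E a x else Adj E x a) := by
  intro q
  induction q with
  | nil =>
      intro a x h1 _ hl
      have hb : x = b := by simpa using hl
      subst hb
      rcases h1 0 (by simp) with hax | hxa
      · exact ⟨true, AWalk.out_single hax, hax⟩
      · exact ⟨false, AWalk.in_single hxa, hxa⟩
  | cons z zs ih =>
      intro a x h1 h2 hl
      obtain ⟨d', w', hd'⟩ := ih x z (chainAdj_tail h1) (chainTri_tail h2)
        (by rw [List.getLast?_cons_cons] at hl; exact hl)
      have tri0 : ActiveTriple E C a x z := h2 0 (by simp)
      rcases h1 0 (by simp) with hax | hxa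
      · have cond : if d' then x ∉ C else desc E C x := by
          cases d' with
          | true => exact (activeTriple_out_out hE hax hd').mp tri0
          | false => exact (activeTriple_out_in hE hax hd').mp tri0
        exact ⟨true, AWalk.out_cons hax w' cond, hax⟩
      · have hxC : x ∉ C := (activeTriple_in hE hxa).mp tri0
        exact ⟨false, AWalk.in_cons hxa w' hxC, hxa⟩

lemma dconn_iff_awalk {E : EdgeSet V} (hE : IsDAG E) {C : Finset V} {a b : V} :
    DConn E C a b ↔ ∃ n d, AWalk E C (desc E C) n d a b := by
  constructor
  · rintro ⟨p, hlen, hhead, hlast, h1, h2⟩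
    rcases p with - | ⟨a', p'⟩
    · simp at hhead
    rcases p' with - | ⟨x, q⟩
    · simp at hlen
    have ha : a' = a := by simpa using hhead
    subst ha
    obtain ⟨d, w, -⟩ := listToWalk hE C b q a' x h1 h2 hlast
    exact ⟨_, d, w⟩
  · rintro ⟨n, d, w⟩
    obtain ⟨x, q, c1, c2, hl, -⟩ := walkToList hE w
    exact ⟨a :: x :: q, by simp, rfl, hl, c1, c2⟩

end CoveredRev
namespace CoveredRev
set_option linter.unusedSectionVars false

variable {V : Type} [Fintype V] [DecidableEq V]

/-- directed step avoiding `C` at the source -/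
def AdjC (E : EdgeSet V) (C : Finset V) (u v : V) : Prop := Adj E u v ∧ u ∉ C

lemma transGen_src_notC {E : EdgeSet V} {C : Finset V} {x y : V}
    (h : Relation.TransGen (AdjC E C) x y) : x ∉ C := by
  cases h with
  | single h => exact h.2
  | tail h _ => exact (Relation.TransGen.head_induction_on h
      (fun h' => h'.2) (fun h' _ _ => h'.2))

lemma first_C_hit {E : EdgeSet V} {C : Finset V} {x e : V} (hx : x ∉ C)
    (h : Relation.ReflTransGen (Adj E) x e) (he : e ∈ C) :
    ∃ d ∈ C, Relation.TransGen (AdjC E C) x d := by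
  induction h using Relation.ReflTransGen.head_induction_on with
  | refl => exact absurd he hx
  | head hstep _ ih =>
      rename_i u v _
      by_cases hv : v ∈ C
      · exact ⟨v, hv, Relation.TransGen.single ⟨hstep, hx⟩⟩
      · obtain ⟨d, hd, htg⟩ := ih hv
        exact ⟨d, hd, Relation.TransGen.head ⟨hstep, hx⟩ htg⟩

/-- Detour down to a vertex of `C` and back: turns an in-directed normalized
walk from `v` into an out-directed one. -/
lemma detour {E : EdgeSet V} {C : Finset V} {b d' : V}
    (hd' : d' ∈ C) :
    ∀ v, Relation.TransGen (AdjC E C) v d' →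
      ∀ n, AWalk E C (inC C) n false v b → ∃ m, AWalk E C (inC C) m true v b := by
  intro v htg
  induction htg using Relation.TransGen.head_induction_on with
  | @single v' hstep =>
      intro n w0
      have w1 : AWalk E C (inC C) (n + 1) false d' b :=
        AWalk.in_cons hstep.1 w0 hstep.2
      exact ⟨n + 2, AWalk.out_cons hstep.1 w1 (by exact hd')⟩
  | @head v' w hstep htg2 ih =>
      intro n w0
      have w1 : AWalk E C (inC C) (n + 1) false w b :=
        AWalk.in_cons hstep.1 w0 hstep.2
      obtain ⟨m, w2⟩ := ih (n + 1) w1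
      have hwC : w ∉ C := transGen_src_notC htg2
      exact ⟨m + 1, AWalk.out_cons hstep.1 w2 (by simpa using hwC)⟩

lemma normalize {E : EdgeSet V} {C : Finset V} {n : ℕ} {d : Bool} {a b : V}
    (h : AWalk E C (desc E C) n d a b) : ∃ m, AWalk E C (inC C) m d a b := by
  induction h with
  | out_single h => exact ⟨1, AWalk.out_single h⟩
  | in_single h => exact ⟨1, AWalk.in_single h⟩
  | @out_cons a x b n dx h1 tl cond ih =>
      obtain ⟨m, w⟩ := ih
      cases dx with
      | true => exact ⟨m + 1, AWalk.out_cons h1 w (by simpa using cond)⟩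
      | false =>
          by_cases hx : x ∈ C
          · exact ⟨m + 1, AWalk.out_cons h1 w (by exact hx)⟩
          · obtain ⟨e, he, hre⟩ := cond
            obtain ⟨dd, hdd, htg⟩ := first_C_hit hx hre he
            obtain ⟨m2, w2⟩ := detour hdd x htg m w
            exact ⟨m2 + 1, AWalk.out_cons h1 w2 (by simpa using hx)⟩
  | @in_cons a x b n dx h1 tl hxC ih =>
      obtain ⟨m, w⟩ := ih
      exact ⟨m + 1, AWalk.in_cons h1 w hxC⟩

end CoveredRev
namespace CoveredRev
set_option linter.unusedSectionVars false

variable {V : Type} [Fintype V] [DecidableEq V]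

section Rev

variable {G H : EdgeSet V} {i j : V}

lemma adjH_iff (hH : H = insert (j, i) (G.erase (i, j))) {x y : V} :
    Adj H x y ↔ (x = j ∧ y = i) ∨ (Adj G x y ∧ ¬(x = i ∧ y = j)) := by
  subst hH
  constructor
  · intro h
    rcases Finset.mem_insert.mp h with he | he
    · exact Or.inl ⟨congrArg Prod.fst he, congrArg Prod.snd he⟩
    · obtain ⟨hne, hm⟩ := Finset.mem_erase.mp he
      refine Or.inr ⟨hm, ?_⟩
      rintro ⟨rfl, rfl⟩
      exact hne rfl
  · rintro (⟨rfl, rfl⟩ | ⟨hm, hne⟩)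
    · exact Finset.mem_insert_self _ _
    · exact Finset.mem_insert_of_mem (Finset.mem_erase.mpr
        ⟨fun he => hne ⟨congrArg Prod.fst he, congrArg Prod.snd he⟩, hm⟩)

variable (hG : IsDAG G) (hij : (i, j) ∈ G)
  (hcov : parents G i = (parents G j).erase i)
  (hH : H = insert (j, i) (G.erase (i, j)))

include hG hij

lemma rev_ne : i ≠ j := fun h => adj_irrefl hG i (h ▸ hij)

lemma rev_nji : ¬ Adj G j i := fun h => adj_asymm hG hij h

include hH

lemma adjH_ji : Adj H j i := (adjH_iff hH).mpr (Or.inl ⟨rfl, rfl⟩)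

lemma adjH_not_ij : ¬ Adj H i j := by
  rw [adjH_iff hH]
  rintro (⟨h1, -⟩ | ⟨-, hne⟩)
  · exact rev_ne hG hij h1
  · exact hne ⟨rfl, rfl⟩

lemma adjH_of_adjG {x y : V} (h : Adj G x y) (hne : ¬(x = i ∧ y = j)) : Adj H x y :=
  (adjH_iff hH).mpr (Or.inr ⟨h, hne⟩)

omit hH

include hcov

lemma cov_pa_i {k : V} (h : Adj G k i) : Adj G k j ∧ k ≠ i := by
  have : k ∈ parents G i := mem_parents.mpr h
  rw [hcov, Finset.mem_erase] at this
  exact ⟨mem_parents.mp this.2, this.1⟩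

lemma cov_pa_j {k : V} (h : Adj G k j) (hk : k ≠ i) : Adj G k i := by
  have : k ∈ (parents G j).erase i := Finset.mem_erase.mpr ⟨hk, mem_parents.mpr h⟩
  rw [← hcov] at this
  exact mem_parents.mp this

omit hcov

/-- In `G` there is no directed path from `i` to `j` avoiding the edge `(i,j)`. -/
lemma no_alt_path (hcov : parents G i = (parents G j).erase i) :
    ¬ Relation.TransGen (fun u v => Adj G u v ∧ ¬(u = i ∧ v = j)) i j := by
  intro h
  obtain ⟨m, hm1, hm2⟩ := Relation.TransGen.tail'_iff.mp h
  have hmi : m ≠ i := fun he => hm2.2 ⟨he, rfl⟩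
  have hmadj : Adj G m i := cov_pa_j hG hij hcov hm2.1 hmi
  have : Relation.ReflTransGen (Adj G) i m := Relation.ReflTransGen.mono (fun _ _ hp => hp.1) _ _ hm1
  exact hG i (Relation.TransGen.tail' this hmadj)

lemma transGenH_split (hH : H = insert (j, i) (G.erase (i, j))) {x y : V}
    (h : Relation.TransGen (Adj H) x y) :
    Relation.TransGen (fun u v => Adj G u v ∧ ¬(u = i ∧ v = j)) x y ∨
      (Relation.ReflTransGen (fun u v => Adj G u v ∧ ¬(u = i ∧ v = j)) x j ∧
       Relation.ReflTransGen (fun u v => Adj G u v ∧ ¬(u = i ∧ v = j)) i y) := by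
  set r := fun u v => Adj G u v ∧ ¬(u = i ∧ v = j) with hr
  induction h with
  | single hstep =>
      rcases (adjH_iff hH).mp hstep with ⟨rfl, rfl⟩ | hg
      · exact Or.inr ⟨Relation.ReflTransGen.refl, Relation.ReflTransGen.refl⟩
      · exact Or.inl (Relation.TransGen.single hg)
  | tail htg hstep ih =>
      rcases (adjH_iff hH).mp hstep with ⟨rfl, rfl⟩ | hg
      · rcases ih with h1 | ⟨h1, h2⟩
        · exact Or.inr ⟨h1.to_reflTransGen, Relation.ReflTransGen.refl⟩
        · exact Or.inr ⟨h1, Relation.ReflTransGen.refl⟩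
      · rcases ih with h1 | ⟨h1, h2⟩
        · exact Or.inl (Relation.TransGen.tail h1 hg)
        · exact Or.inr ⟨h1, h2.tail hg⟩

include hcov hH

lemma rev_isDAG : IsDAG H := by
  intro v hv
  rcases transGenH_split hG hij hH hv with h1 | ⟨h1, h2⟩
  · exact hG v (Relation.TransGen.mono (fun _ _ hp => hp.1) _ _ h1)
  · have hij' : Relation.ReflTransGen (fun u v => Adj G u v ∧ ¬(u = i ∧ v = j)) i j :=
      h2.trans h1
    rcases (Relation.reflTransGen_iff_eq_or_transGen.mp hij') with he | htg
    · exact rev_ne hG hij he.symm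
    · exact no_alt_path hG hij hcov htg

lemma rev_cov : parents H j = (parents H i).erase j := by
  ext x
  rw [Finset.mem_erase, mem_parents, mem_parents]
  have hx1 : Adj H x j ↔ Adj G x j ∧ x ≠ i := by
    rw [adjH_iff hH]
    constructor
    · rintro (⟨hxj, hji⟩ | ⟨hg, hne⟩)
      · exact absurd hji.symm (rev_ne hG hij)
      · exact ⟨hg, fun he => hne ⟨he, rfl⟩⟩
    · rintro ⟨hg, hne⟩
      exact Or.inr ⟨hg, fun hp => hne hp.1⟩
  have hx2 : Adj H x i ↔ x = j ∨ Adj G x i := by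
    rw [adjH_iff hH]
    constructor
    · rintro (⟨rfl, -⟩ | ⟨hg, -⟩)
      · exact Or.inl rfl
      · exact Or.inr hg
    · rintro (rfl | hg)
      · exact Or.inl ⟨rfl, rfl⟩
      · exact Or.inr ⟨hg, fun hp => (rev_ne hG hij) hp.2⟩
  show Adj H x j ↔ x ≠ j ∧ Adj H x i
  rw [hx1, hx2]
  constructor
  · rintro ⟨hg, hne⟩
    have := cov_pa_j hG hij hcov hg hne
    exact ⟨fun he => rev_nji hG hij (he ▸ this), Or.inr this⟩
  · rintro ⟨hne, rfl | hg⟩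
    · exact absurd rfl hne
    · obtain ⟨h1, h2⟩ := cov_pa_i hG hij hcov hg
      exact ⟨h1, h2⟩

omit hcov

lemma rev_eq : G = insert (i, j) (H.erase (j, i)) := by
  subst hH
  ext e
  simp only [Finset.mem_insert, Finset.mem_erase, Ne]
  constructor
  · intro he
    by_cases h : e = (i, j)
    · exact Or.inl h
    · refine Or.inr ⟨?_, Or.inr ⟨h, he⟩⟩
      rintro rfl
      exact rev_nji hG hij he
  · rintro (rfl | ⟨hne, rfl | ⟨-, he⟩⟩)
    · exact hij
    · exact absurd rfl hne
    · exact he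

end Rev

end CoveredRev
namespace CoveredRev
set_option linter.unusedSectionVars false

variable {V : Type} [Fintype V] [DecidableEq V]

lemma desc_walk_out {E : EdgeSet V} (hE : IsDAG E) (u : V) :
    ∀ {n : ℕ} {d : Bool} {x y : V},
      AWalk E (parents E u) (desc E (parents E u)) n d x y → d = true →
      Relation.ReflTransGen (Adj E) u x → Relation.ReflTransGen (Adj E) u y := by
  intro n d x y w
  induction w with
  | out_single h => intro _ hux; exact hux.tail h
  | in_single h => intro hd _; exact absurd hd (by simp)
  | @out_cons a x' b n dx h1 tl cond ih =>
      intro _ hua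
      have hux' : Relation.ReflTransGen (Adj E) u x' := hua.tail h1
      cases dx with
      | true => exact ih rfl hux'
      | false =>
          obtain ⟨e, he, hre⟩ := cond
          have : Relation.TransGen (Adj E) u u :=
            Relation.TransGen.tail' (hux'.trans hre) (mem_parents.mp he)
          exact absurd this (hE u)
  | in_cons h1 tl hxC ih => intro hd _; exact absurd hd (by simp)

lemma local_markov_sep {E : EdgeSet V} (hE : IsDAG E) {u k : V}
    (hnd : ¬ Relation.ReflTransGen (Adj E) u k) (hnp : (k, u) ∉ E) :
    ¬ DConn E (parents E u) u k := by
  intro hconn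
  obtain ⟨n, d, w⟩ := (dconn_iff_awalk hE).mp hconn
  cases d with
  | true => exact hnd (desc_walk_out hE u w rfl Relation.ReflTransGen.refl)
  | false =>
      cases w with
      | in_single h => exact hnp h
      | in_cons h1 tl hxC => exact hxC (mem_parents.mpr h1)

lemma not_isub_of_uncovered {E E' : EdgeSet V} (hE : IsDAG E) (hE' : IsDAG E')
    {a b k : V} (hab : (a, b) ∈ E) (hka : (k, a) ∈ E) (hkb : (k, b) ∉ E)
    (hE'eq : E' = insert (b, a) (E.erase (a, b))) : ¬ ISub E E' := by
  intro hsub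
  have hbk : b ≠ k := by
    rintro rfl
    exact adj_asymm hE hab hka
  have hdisj : PairwiseDisjoint3 ({b} : Finset V) {k} (parents E b) := by
    refine ⟨by simp only [Finset.disjoint_singleton_left, Finset.mem_singleton]; exact hbk, ?_, ?_⟩
    · simp only [Finset.disjoint_singleton_left]
      intro hmem
      exact adj_irrefl hE b (mem_parents.mp hmem)
    · simp only [Finset.disjoint_singleton_left]
      intro hmem
      exact hkb (mem_parents.mp hmem)
  have hsepE : DSep E {b} {k} (parents E b) := by
    intro a' ha' b' hb'
    rw [Finset.mem_singleton] at ha' hb'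
    rw [ha', hb']
    refine local_markov_sep hE ?_ hkb
    intro hr
    exact hE b (Relation.TransGen.tail' (hr.tail hka) hab)
  have hconn' : DConn E' (parents E b) b k := by
    rw [dconn_iff_awalk hE']
    have hba : Adj E' b a := by rw [hE'eq]; exact Finset.mem_insert_self _ _
    have hka' : Adj E' k a := by
      rw [hE'eq]
      refine Finset.mem_insert_of_mem (Finset.mem_erase.mpr ⟨?_, hka⟩)
      intro he
      have : k = a := congrArg Prod.fst he
      exact adj_irrefl hE a (this ▸ hka)
    refine ⟨2, true, AWalk.out_cons hba (AWalk.in_single hka') ?_⟩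
    exact ⟨a, mem_parents.mpr hab, Relation.ReflTransGen.refl⟩
  exact (hsub _ _ _ hdisj hsepE) b (Finset.mem_singleton_self b)
    k (Finset.mem_singleton_self k) hconn'

end CoveredRev
namespace CoveredRev
set_option linter.unusedSectionVars false

variable {V : Type} [Fintype V] [DecidableEq V]

def NeedJ (H : EdgeSet V) (C : Finset V) (j b : V) : Prop :=
  ∃ n' d', AWalk H C (inC C) n' d' j b ∧ (if d' then j ∉ C else j ∈ C)

def NeedI (H : EdgeSet V) (C : Finset V) (i b : V) : Prop :=
  ∃ n', AWalk H C (inC C) n' true i b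

def WalkI (H : EdgeSet V) (C : Finset V) (i b : V) : Prop :=
  ∃ n' d', AWalk H C (inC C) n' d' i b

def Ans (H : EdgeSet V) (C : Finset V) (i j b x : V) (d : Bool) : Prop :=
  (∃ n' d', AWalk H C (inC C) n' d' x b ∧
     (d = true → x ∉ C → d' = true) ∧ (d = false → x ∈ C → d' = false)) ∨
  (x = i ∧ d = true ∧ (b = j ∨ b = i ∨ (NeedJ H C j b ∧ (j ∈ C → WalkI H C i b)))) ∨
  (x = j ∧ d = false ∧ (b = i ∨ b = j ∨ (i ∉ C ∧ NeedI H C i b)))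

theorem transfer {G H : EdgeSet V} {i j : V} (hG : IsDAG G) (hij : (i, j) ∈ G)
    (hcov : parents G i = (parents G j).erase i)
    (hH : H = insert (j, i) (G.erase (i, j))) (C : Finset V) (b : V) :
    ∀ n (d : Bool) (x : V), AWalk G C (inC C) n d x b → Ans H C i j b x d := by
  have hne : i ≠ j := rev_ne hG hij
  have hnji : ¬ Adj G j i := rev_nji hG hij
  have hHji : Adj H j i := adjH_ji hG hij hH
  have mkH : ∀ {x y : V}, Adj G x y → ¬(x = i ∧ y = j) → Adj H x y :=
    fun h hn => adjH_of_adjG hG hij hH h hn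
  have paiH : ∀ {k : V}, Adj G k i → Adj H k i ∧ Adj H k j ∧ k ≠ i ∧ k ≠ j := by
    intro k h
    obtain ⟨hkj, hki⟩ := cov_pa_i hG hij hcov h
    have hkj' : k ≠ j := fun he => hnji (he ▸ h)
    exact ⟨mkH h (fun hp => hne hp.2), mkH hkj (fun hp => hki hp.1), hki, hkj'⟩
  have pajH : ∀ {z : V}, Adj G z j → z ≠ i → Adj H z j ∧ Adj H z i ∧ z ≠ j := by
    intro z h hzi
    have hzj : z ≠ j := fun he => adj_irrefl hG j (he ▸ h)
    have hzi' := cov_pa_j hG hij hcov h hzi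
    exact ⟨mkH h (fun hp => hzi hp.1), mkH hzi' (fun hp => hne hp.2), hzj⟩
  intro n
  induction n using Nat.strong_induction_on with
  | _ n IH =>
  intro d x w
  cases w with
  | @out_single x b hxb =>
      by_cases hsp : x = i ∧ b = j
      · exact Or.inr (Or.inl ⟨hsp.1, rfl, Or.inl hsp.2⟩)
      · exact Or.inl ⟨1, true, AWalk.out_single (mkH hxb hsp), fun _ _ => rfl, by simp⟩
  | @in_single x b hbx =>
      by_cases hsp : b = i ∧ x = j
      · exact Or.inr (Or.inr ⟨hsp.2, rfl, Or.inl hsp.1⟩)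
      · exact Or.inl ⟨1, false, AWalk.in_single (mkH hbx hsp), by simp, fun _ _ => rfl⟩
  | @out_cons x x' b m dx hax tl cond =>
      by_cases hsp : x = i ∧ x' = j
      · -- walk starts with the special edge i → j
        have hs1 : i = x := hsp.1.symm
        subst hs1
        have hs2 : j = x' := hsp.2.symm
        subst hs2
        cases dx with
        | true =>
            have hjC : j ∉ C := by simpa using cond
            rcases IH m (Nat.lt_succ_self m) true j tl with plain | exc1 | exc2
            · obtain ⟨n', d', wH, pr1, pr2⟩ := plain
              have hd' : d' = true := pr1 rfl hjC
              subst hd'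
              exact Or.inr (Or.inl ⟨rfl, rfl, Or.inr (Or.inr
                ⟨⟨n', true, wH, by simpa using hjC⟩, fun hc => absurd hc hjC⟩)⟩)
            · exact absurd exc1.1 (Ne.symm hne)
            · exact absurd exc2.2.1 (by simp)
        | false =>
            have hjC : j ∈ C := by simpa [inC] using cond
            cases tl with
            | @in_single _ bb hbj =>
                by_cases hbi : b = i
                · exact Or.inr (Or.inl ⟨rfl, rfl, Or.inr (Or.inl hbi)⟩)
                · obtain ⟨hHbj, hHbi, hbj'⟩ := pajH hbj hbi
                  exact Or.inr (Or.inl ⟨rfl, rfl, Or.inr (Or.inr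
                    ⟨⟨1, false, AWalk.in_single hHbj, by simpa using hjC⟩,
                     fun _ => ⟨1, false, AWalk.in_single hHbi⟩⟩)⟩)
            | @in_cons _ z _ m2 dz hzj tl2 hzC =>
                by_cases hzi : z = i
                · subst hzi
                  rcases IH m2 (by omega) dz z tl2 with plain | exc1 | exc2
                  · obtain ⟨n', d', w2, pr1, pr2⟩ := plain
                    cases d' with
                    | true => exact Or.inl ⟨n', true, w2, fun _ _ => rfl, by simp⟩
                    | false =>
                        have hdz : dz = false := by
                          cases dz with
                          | false => rfl
                          | true => exact absurd (pr1 rfl hzC) (by simp)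
                        subst hdz
                        cases tl2 with
                        | @in_single _ _ hbi2 =>
                            obtain ⟨hHbi, hHbj, -, -⟩ := paiH hbi2
                            exact Or.inr (Or.inl ⟨rfl, rfl, Or.inr (Or.inr
                              ⟨⟨1, false, AWalk.in_single hHbj, by simpa using hjC⟩,
                               fun _ => ⟨n', false, w2⟩⟩)⟩)
                        | @in_cons _ w3v _ m3 dw hwi tl3 hwC =>
                            obtain ⟨hHwi, hHwj, hwne_i, hwne_j⟩ := paiH hwi
                            rcases IH m3 (by omega) dw w3v tl3 with plain3 | exc | exc
                            · obtain ⟨n3, d3, w3, -, -⟩ := plain3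
                              exact Or.inr (Or.inl ⟨rfl, rfl, Or.inr (Or.inr
                                ⟨⟨n3 + 1, false, AWalk.in_cons hHwj w3 hwC,
                                  by simpa using hjC⟩,
                                 fun _ => ⟨n', false, w2⟩⟩)⟩)
                            · exact absurd exc.1 hwne_i
                            · exact absurd exc.1 hwne_j
                  · exact Or.inr (Or.inl ⟨rfl, rfl, exc1.2.2⟩)
                  · exact absurd exc2.1 hne
                · obtain ⟨hHzj, hHzi, hzj'⟩ := pajH hzj hzi
                  rcases IH m2 (by omega) dz z tl2 with plain | exc | exc
                  · obtain ⟨n2, d2, w2, -, -⟩ := plain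
                    exact Or.inr (Or.inl ⟨rfl, rfl, Or.inr (Or.inr
                      ⟨⟨n2 + 1, false, AWalk.in_cons hHzj w2 hzC, by simpa using hjC⟩,
                       fun _ => ⟨n2 + 1, false, AWalk.in_cons hHzi w2 hzC⟩⟩)⟩)
                  · exact absurd exc.1 hzi
                  · exact absurd exc.1 hzj'
      · -- first edge is not the special edge
        have haxH : Adj H x x' := mkH hax hsp
        rcases IH m (Nat.lt_succ_self m) dx x' tl with plain | exc1 | exc2
        · obtain ⟨n', d', wH, pr1, pr2⟩ := plain
          have hcond' : if d' then x' ∉ C else inC C x' := by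
            cases dx with
            | true =>
                have h1 : x' ∉ C := by simpa using cond
                rw [pr1 rfl h1]
                simpa using h1
            | false =>
                have h1 : x' ∈ C := by simpa [inC] using cond
                rw [pr2 rfl h1]
                simpa [inC] using h1
          exact Or.inl ⟨n' + 1, true, AWalk.out_cons haxH wH hcond', fun _ _ => rfl, by simp⟩
        · obtain ⟨hx'i, hdx, payload⟩ := exc1
          subst hx'i
          obtain ⟨hHxi, hHxj, -, -⟩ := paiH hax
          rcases payload with hbj | hbi | ⟨⟨nj, dj, wj, condj⟩, -⟩
          · subst hbj
            exact Or.inl ⟨1, true, AWalk.out_single hHxj, fun _ _ => rfl, by simp⟩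
          · subst hbi
            exact Or.inl ⟨1, true, AWalk.out_single hHxi, fun _ _ => rfl, by simp⟩
          · exact Or.inl ⟨nj + 1, true, AWalk.out_cons hHxj wj condj, fun _ _ => rfl, by simp⟩
        · obtain ⟨hx'j, hdx, payload⟩ := exc2
          subst hx'j
          have hxi : x ≠ i := fun hxi => hsp ⟨hxi, rfl⟩
          obtain ⟨hHxj, hHxi, -⟩ := pajH hax hxi
          rcases payload with hbi | hbj | ⟨hiC, ni, wi⟩
          · subst hbi
            exact Or.inl ⟨1, true, AWalk.out_single hHxi, fun _ _ => rfl, by simp⟩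
          · subst hbj
            exact Or.inl ⟨1, true, AWalk.out_single hHxj, fun _ _ => rfl, by simp⟩
          · exact Or.inl ⟨ni + 1, true, AWalk.out_cons hHxi wi (by simpa using hiC),
              fun _ _ => rfl, by simp⟩
  | @in_cons x x' b m dx hx'x tl hx'C =>
      by_cases hsp : x' = i ∧ x = j
      · -- walk starts by traversing the special edge backwards: j, i, ...
        have hs1 : i = x' := hsp.1.symm
        subst hs1
        have hs2 : j = x := hsp.2.symm
        subst hs2
        rcases IH m (Nat.lt_succ_self m) dx i tl with plain | exc1 | exc2
        · obtain ⟨n', d', w2, pr1, pr2⟩ := plain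
          cases d' with
          | true =>
              exact Or.inr (Or.inr ⟨rfl, rfl, Or.inr (Or.inr ⟨hx'C, n', w2⟩)⟩)
          | false =>
              have hdx : dx = false := by
                cases dx with
                | false => rfl
                | true => exact absurd (pr1 rfl hx'C) (by simp)
              subst hdx
              cases tl with
              | @in_single _ _ hbi =>
                  obtain ⟨-, hHbj, -, -⟩ := paiH hbi
                  exact Or.inl ⟨1, false, AWalk.in_single hHbj, by simp, fun _ _ => rfl⟩
              | @in_cons _ w3v _ m3 dw hwi tl3 hwC =>
                  obtain ⟨-, hHwj, hw_i, hw_j⟩ := paiH hwi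
                  rcases IH m3 (by omega) dw w3v tl3 with plain3 | exc | exc
                  · obtain ⟨n3, d3, w3, -, -⟩ := plain3
                    exact Or.inl ⟨n3 + 1, false, AWalk.in_cons hHwj w3 hwC,
                      by simp, fun _ _ => rfl⟩
                  · exact absurd exc.1 hw_i
                  · exact absurd exc.1 hw_j
        · obtain ⟨-, -, payload⟩ := exc1
          rcases payload with hbj | hbi | ⟨⟨nj, dj, wj, condj⟩, -⟩
          · exact Or.inr (Or.inr ⟨rfl, rfl, Or.inr (Or.inl hbj)⟩)
          · exact Or.inr (Or.inr ⟨rfl, rfl, Or.inl hbi⟩)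
          · refine Or.inl ⟨nj, dj, wj, by simp, fun _ hjc => ?_⟩
            cases dj with
            | false => rfl
            | true => exact absurd hjc (by simpa using condj)
        · exact absurd exc2.1 hne
      · -- first edge is not the special edge
        have hxH : Adj H x' x := mkH hx'x hsp
        rcases IH m (Nat.lt_succ_self m) dx x' tl with plain | exc1 | exc2
        · obtain ⟨n', d', wH, -, -⟩ := plain
          exact Or.inl ⟨n' + 1, false, AWalk.in_cons hxH wH hx'C, by simp, fun _ _ => rfl⟩
        · obtain ⟨hx'i, -, payload⟩ := exc1
          have hs : i = x' := hx'i.symm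
          subst hs
          have hxj : x ≠ j := fun hxj => hsp ⟨rfl, hxj⟩
          have hHix : Adj H i x := mkH hx'x (fun hp => hxj hp.2)
          rcases payload with hbj | hbi | ⟨⟨nj, dj, wj, condj⟩, hwalki⟩
          · subst hbj
            exact Or.inl ⟨2, false, AWalk.in_cons hHix (AWalk.in_single hHji) hx'C,
              by simp, fun _ _ => rfl⟩
          · subst hbi
            exact Or.inl ⟨1, false, AWalk.in_single hHix, by simp, fun _ _ => rfl⟩
          · by_cases hjC : j ∈ C
            · obtain ⟨nw, dw, ww⟩ := hwalki hjC
              exact Or.inl ⟨nw + 1, false, AWalk.in_cons hHix ww hx'C,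
                by simp, fun _ _ => rfl⟩
            · have hdj : dj = true := by
                cases dj with
                | true => rfl
                | false => exact absurd (by simpa using condj) hjC
              subst hdj
              exact Or.inl ⟨nj + 2, false,
                AWalk.in_cons hHix (AWalk.in_cons hHji wj hjC) hx'C,
                by simp, fun _ _ => rfl⟩
        · obtain ⟨hx'j, -, payload⟩ := exc2
          have hs : j = x' := hx'j.symm
          subst hs
          have hHjx : Adj H j x := mkH hx'x (fun hp => hne hp.1.symm)
          rcases payload with hbi | hbj | ⟨hiC, ni, wi⟩
          · subst hbi
            exact Or.inl ⟨2, false, AWalk.in_cons hHjx (AWalk.out_single hHji) hx'C,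
              by simp, fun _ _ => rfl⟩
          · subst hbj
            exact Or.inl ⟨1, false, AWalk.in_single hHjx, by simp, fun _ _ => rfl⟩
          · exact Or.inl ⟨ni + 2, false,
              AWalk.in_cons hHjx (AWalk.out_cons hHji wi (by simpa using hiC)) hx'C,
              by simp, fun _ _ => rfl⟩

end CoveredRev
namespace CoveredRev
set_option linter.unusedSectionVars false

variable {V : Type} [Fintype V] [DecidableEq V]

lemma dconn_transfer {G H : EdgeSet V} {i j : V} (hG : IsDAG G) (hij : (i, j) ∈ G)
    (hcov : parents G i = (parents G j).erase i)
    (hH : H = insert (j, i) (G.erase (i, j)))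
    (hHdag : IsDAG H) {C : Finset V} {a b : V} (hab : a ≠ b) (h : DConn G C a b) :
    DConn H C a b := by
  have hHji : Adj H j i := adjH_ji hG hij hH
  obtain ⟨n, d, w⟩ := (dconn_iff_awalk hG).mp h
  obtain ⟨m, w2⟩ := normalize w
  have toD : ∀ {n' : ℕ} {d' : Bool}, AWalk H C (inC C) n' d' a b → DConn H C a b := by
    intro n' d' wh
    exact (dconn_iff_awalk hHdag).mpr
      ⟨n', d', wh.mono (fun x hx => ⟨x, hx, Relation.ReflTransGen.refl⟩)⟩
  rcases transfer hG hij hcov hH C b m d a w2 with plain | exc1 | exc2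
  · obtain ⟨n', d', wH, -, -⟩ := plain
    exact toD wH
  · obtain ⟨hai, -, payload⟩ := exc1
    rcases payload with hbj | hbi | ⟨⟨nj, dj, wj, condj⟩, hwalki⟩
    · subst hai; subst hbj
      exact toD (AWalk.in_single hHji)
    · exact absurd (hai.trans hbi.symm) hab
    · by_cases hjC : j ∈ C
      · obtain ⟨nw, dw, ww⟩ := hwalki hjC
        subst hai
        exact toD ww
      · subst hai
        exact toD (AWalk.in_cons hHji wj hjC)
  · obtain ⟨haj, -, payload⟩ := exc2
    rcases payload with hbi | hbj | ⟨hiC, ni, wi⟩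
    · subst haj; subst hbi
      exact toD (AWalk.out_single hHji)
    · exact absurd (haj.trans hbj.symm) hab
    · subst haj
      exact toD (AWalk.out_cons hHji wi (by simpa using hiC))

end CoveredRev

theorem reversal_MEC_iff_covered' {V : Type} [Fintype V] [DecidableEq V]
    (G : EdgeSet V) (hG : IsDAG G)
    (i j : V) (hij : (i, j) ∈ G) (H : EdgeSet V)
    (hH : H = insert (j, i) (G.erase (i, j))) :
    ((IsDAG H ∧ MEquiv H G) ↔ parents G i = (parents G j).erase i) := by
  constructor
  · rintro ⟨hHdag, hM⟩
    by_contra hnc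
    rw [Finset.ext_iff] at hnc
    push_neg at hnc
    obtain ⟨k, hk⟩ := hnc
    rcases hk with ⟨hk1, hk2⟩ | ⟨hk1, hk2⟩
    · have hki : Adj G k i := CoveredRev.mem_parents.mp hk1
      have hkne : k ≠ i := fun he => CoveredRev.adj_irrefl hG i (he ▸ hki)
      have hkj : (k, j) ∉ G := fun h =>
        hk2 (Finset.mem_erase.mpr ⟨hkne, CoveredRev.mem_parents.mpr h⟩)
      exact CoveredRev.not_isub_of_uncovered hG hHdag hij hki hkj hH hM.2
    · obtain ⟨hkne, hkj⟩ := Finset.mem_erase.mp hk2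
      have hkjA : Adj G k j := CoveredRev.mem_parents.mp hkj
      have hkjne : k ≠ j := fun he => CoveredRev.adj_irrefl hG j (he ▸ hkjA)
      have hji : (j, i) ∈ H := by rw [hH]; exact Finset.mem_insert_self _ _
      have hkjH : (k, j) ∈ H :=
        CoveredRev.adjH_of_adjG hG hij hH hkjA (fun hp => hkne hp.1)
      have hkiH : (k, i) ∉ H := by
        intro h
        rcases (CoveredRev.adjH_iff hH).mp h with ⟨h1, -⟩ | ⟨h1, -⟩
        · exact hkjne h1
        · exact hk1 (CoveredRev.mem_parents.mpr h1)
      exact CoveredRev.not_isub_of_uncovered hHdag hG hji hkjH hkiH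
        (CoveredRev.rev_eq hG hij hH) hM.1
  · intro hcov
    have hHdag := CoveredRev.rev_isDAG hG hij hcov hH
    have hji : (j, i) ∈ H := by rw [hH]; exact Finset.mem_insert_self _ _
    have hcov' := CoveredRev.rev_cov hG hij hcov hH
    have hHG := CoveredRev.rev_eq hG hij hH
    refine ⟨hHdag, ?_, ?_⟩
    · intro A B C hdisj hsep a ha b hb hconn
      have hab : a ≠ b := fun he => Finset.disjoint_left.mp hdisj.1 ha (he ▸ hb)
      exact hsep a ha b hb (CoveredRev.dconn_transfer hG hij hcov hH hHdag hab hconn)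
    · intro A B C hdisj hsep a ha b hb hconn
      have hab : a ≠ b := fun he => Finset.disjoint_left.mp hdisj.1 ha (he ▸ hb)
      exact hsep a ha b hb (CoveredRev.dconn_transfer hHdag hji hcov' hHG hG hab hconn)

/-- reversing `i → j` yields a Markov-equivalent DAG iff `i → j`
is a covered edge. -/
theorem reversal_MEC_iff_covered (G : EdgeSet V) (hG : IsDAG G)
    (i j : V) (hij : (i, j) ∈ G) (H : EdgeSet V)
    (hH : H = insert (j, i) (G.erase (i, j))) :
    ((IsDAG H ∧ MEquiv H G) ↔ parents G i = (parents G j).erase i) :=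
  reversal_MEC_iff_covered' G hG i j hij H hH
end

section
/- Let P be a graphoid over V, let π be a permutation with covered edge j → k in the induced DAG G_π, let H be the DAG obtained by reversing j → k in G_π, and let τ = tuck(π, j, k). Then: (a) τ is a causal order of H; (b) E(G_τ) ⊆ E(H); (c) |E(G_τ)| ≤ |E(G_π)|; and (d) I(G_π) ⊆ I(G_τ). -/
open Classical
attribute [local instance] Classical.propDecidable

variable {V : Type} [Fintype V] [DecidableEq V]

set_option linter.unusedSectionVars false

section TuckAux

variable {V : Type} [Fintype V] [DecidableEq V]

lemma takeWhile_append_not_mem (l₁ l₂ : List V) (v : V) (h : v ∉ l₁) :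
    (l₁ ++ l₂).takeWhile (fun x => x != v) = l₁ ++ l₂.takeWhile (fun x => x != v) := by
  induction l₁ with
  | nil => simp
  | cons a t ih =>
    have ha : a ≠ v := fun hav => h (hav ▸ (List.mem_cons_self : a ∈ a :: t))
    have ht : v ∉ t := fun hm => h (List.mem_cons_of_mem _ hm)
    simp [List.takeWhile_cons, ha, ih ht]

lemma takeWhile_cons_self (v : V) (l : List V) :
    (v :: l).takeWhile (fun x => x != v) = [] := by
  simp [List.takeWhile_cons]

lemma pre_split (l₁ l₂ : List V) (v : V) (h : v ∉ l₁) :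
    pre (l₁ ++ v :: l₂) v = l₁.toFinset := by
  unfold pre
  rw [takeWhile_append_not_mem _ _ _ h, takeWhile_cons_self]
  simp

lemma indexOf_lt_of_mem_pre {σ : List V} {x y : V} (h : x ∈ pre σ y) :
    σ.idxOf x < σ.idxOf y := by
  unfold pre at h
  rw [List.mem_toFinset] at h
  set t := σ.takeWhile (fun z => z != y) with htdef
  have hy : y ∉ t := by
    intro hm
    have := List.mem_takeWhile_imp hm
    simp at this
  have hσ : t ++ σ.dropWhile (fun z => z != y) = σ := List.takeWhile_append_dropWhile
  have h1 : List.idxOf x (t ++ σ.dropWhile (fun z => z != y)) = t.idxOf x :=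
    List.idxOf_append_of_mem h
  have h2 : List.idxOf y (t ++ σ.dropWhile (fun z => z != y)) =
      t.length + List.idxOf y (σ.dropWhile (fun z => z != y)) :=
    List.idxOf_append_of_notMem hy
  rw [hσ] at h1 h2
  have h3 : t.idxOf x < t.length := List.idxOf_lt_length_iff.2 h
  omega

lemma nodup_split_not_mem {l₁ l₂ : List V} {b : V} (h : (l₁ ++ b :: l₂).Nodup) : b ∉ l₁ := by
  rw [List.nodup_append] at h
  intro hb
  exact h.2.2 b hb b List.mem_cons_self rfl

lemma mem_RUedges {I : IndepModel V} {π : List V} {a b : V} :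
    (a, b) ∈ RUedges I π ↔ a ∈ pre π b ∧ ¬ I {a} {b} ((pre π b).erase a) := by
  unfold RUedges
  simp

lemma mem_parents {E : EdgeSet V} {x v : V} : x ∈ parents E v ↔ (x, v) ∈ E := by
  unfold parents
  simp only [Finset.mem_image, Finset.mem_filter]
  constructor
  · rintro ⟨⟨a, c⟩, ⟨hmem, hc⟩, rfl⟩
    simp only at hc
    subst hc
    exact hmem
  · intro h
    exact ⟨(x, v), ⟨h, rfl⟩, rfl⟩

lemma graphoid_fold {I : IndepModel V} (hG : Graphoid I) (v : V) :
    ∀ (N : Finset V), ∀ (P : Finset V), N ⊆ P → N.Nonempty →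
      (∀ d ∈ N, I {v} {d} (P \ {d})) → I {v} N (P \ N) := by
  intro N
  induction N using Finset.strongInduction with
  | _ N ih =>
    intro P hNP hne hI
    obtain ⟨d, hd⟩ := hne
    by_cases hrest : N.erase d = ∅
    · have hNd : N = {d} := by
        apply Finset.eq_singleton_iff_unique_mem.2
        refine ⟨hd, fun x hx => ?_⟩
        by_contra hxd
        exact absurd (Finset.mem_erase.2 ⟨hxd, hx⟩) (by simp [hrest])
      rw [hNd]
      simpa [hNd] using hI d hd
    · have hne' : (N.erase d).Nonempty := Finset.nonempty_iff_ne_empty.2 hrest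
      have hdP : d ∈ P := hNP hd
      have h1 : I {v} (N.erase d) (P \ (N.erase d)) :=
        ih _ (Finset.erase_ssubset hd) P (le_trans (Finset.erase_subset _ _) hNP) hne'
          (fun x hx => hI x (Finset.mem_of_mem_erase hx))
      have h2 : I {v} {d} (P \ {d}) := hI d hd
      have e1 : P \ N ∪ {d} = P \ (N.erase d) := by
        ext x
        simp only [Finset.mem_union, Finset.mem_sdiff, Finset.mem_singleton, Finset.mem_erase]
        by_cases hx : x = d
        · subst hx; simp [hdP]
        · simp [hx]
      have e2 : P \ N ∪ N.erase d = P \ {d} := by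
        ext x
        simp only [Finset.mem_union, Finset.mem_sdiff, Finset.mem_singleton, Finset.mem_erase]
        constructor
        · rintro (⟨hxP, hxN⟩ | ⟨hxd, hxN⟩)
          · exact ⟨hxP, fun hxd => hxN (hxd ▸ hd)⟩
          · exact ⟨hNP hxN, hxd⟩
        · rintro ⟨hxP, hxd⟩
          by_cases hxN : x ∈ N
          · exact Or.inr ⟨hxd, hxN⟩
          · exact Or.inl ⟨hxP, hxN⟩
      have h3 := hG.intersection {v} (N.erase d) {d} (P \ N) (by rw [e1]; exact h1)
        (by rw [e2]; exact h2)
      have e3 : N.erase d ∪ {d} = N := by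
        rw [Finset.union_comm]
        rw [← Finset.insert_eq]
        exact Finset.insert_erase hd
      rwa [e3] at h3

/-- Arrival-mode active-walk continuation: `AW G C col b v m` says there is an
active walk continuation from `v` (arrived with mode `m`: `true` = via an edge
into `v`) ending at `b`, where colliders pass if `col` holds and non-colliders
pass if the vertex is outside `C`. -/
inductive AW (G : EdgeSet V) (C : Finset V) (col : V → Prop) (b : V) : V → Bool → Prop
  | base (m : Bool) : AW G C col b b m
  | fwd {v w : V} (m : Bool) (hv : v ∉ C) (he : (v, w) ∈ G) (h : AW G C col b w true) :
      AW G C col b v m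
  | back {v w : V} (m : Bool) (hv : if m then col v else v ∉ C) (he : (w, v) ∈ G)
      (h : AW G C col b w false) : AW G C col b v m

def colAn (G : EdgeSet V) (C : Finset V) (v : V) : Prop :=
  ∃ d ∈ C, Relation.ReflTransGen (Adj G) v d

def AWStart (G : EdgeSet V) (C : Finset V) (col : V → Prop) (a b : V) : Prop :=
  ∃ w, ((a, w) ∈ G ∧ AW G C col b w true) ∨ ((w, a) ∈ G ∧ AW G C col b w false)

lemma AW.toFalse {G : EdgeSet V} {C : Finset V} {col : V → Prop} {b v : V}
    (h : AW G C col b v true) (hv : v ∉ C) : AW G C col b v false := by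
  cases h with
  | base => exact .base _
  | fwd m hv' he h => exact .fwd _ hv' he h
  | back m hv' he h => exact .back _ (by simpa using hv) he h

lemma AW.toTrue {G : EdgeSet V} {C : Finset V} {col : V → Prop} {b v : V}
    (h : AW G C col b v false) (hv : v ∈ C) (m : Bool) : AW G C col b v m := by
  cases h with
  | base => exact .base _
  | fwd m hv' he h => exact (hv' hv).elim
  | back m hv' he h => exact absurd hv (by simpa using hv')

lemma AW.mono {G G' : EdgeSet V} {C : Finset V} {col col' : V → Prop} {b v : V} {m : Bool}
    (hsub : ∀ e : V × V, e ∈ G → e ∈ G') (hcol : ∀ v, col v → col' v)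
    (h : AW G C col b v m) : AW G' C col' b v m := by
  induction h with
  | base m => exact .base _
  | fwd m hv he _ ih => exact .fwd _ hv (hsub _ he) ih
  | back m hv he _ ih =>
    refine .back _ ?_ (hsub _ he) ih
    cases m
    · simpa using hv
    · simpa using hcol _ (by simpa using hv)

lemma AWStart.mono {G G' : EdgeSet V} {C : Finset V} {col col' : V → Prop} {a b : V}
    (hsub : ∀ e : V × V, e ∈ G → e ∈ G') (hcol : ∀ v, col v → col' v)
    (h : AWStart G C col a b) : AWStart G' C col' a b := by
  obtain ⟨w, ⟨he, haw⟩ | ⟨he, haw⟩⟩ := h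
  · exact ⟨w, Or.inl ⟨hsub _ he, haw.mono hsub hcol⟩⟩
  · exact ⟨w, Or.inr ⟨hsub _ he, haw.mono hsub hcol⟩⟩

lemma AW.det {G : EdgeSet V} {C : Finset V} {b : V} {d : V} (hd : d ∈ C) :
    ∀ {v : V}, Relation.ReflTransGen (Adj G) v d →
      AW G C (· ∈ C) b v false → ∀ m, AW G C (· ∈ C) b v m := by
  intro v hrtg
  induction hrtg using Relation.ReflTransGen.head_induction_on with
  | refl =>
    intro h m
    cases m
    · exact h
    · exact h.toTrue hd _
  | head hvu hrtg ih =>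
    rename_i v u
    intro h m
    cases m
    · exact h
    · by_cases hvC : v ∈ C
      · exact h.toTrue hvC _
      · by_cases huC : u ∈ C
        · exact .fwd _ hvC hvu (.back _ (by simpa using huC) hvu h)
        · exact .fwd _ hvC hvu (ih (.back _ (by simpa using huC) hvu h) true)

lemma AW.anToSt {G : EdgeSet V} {C : Finset V} {b v : V} {m : Bool}
    (h : AW G C (colAn G C) b v m) : AW G C (· ∈ C) b v m := by
  induction h with
  | base m => exact .base _
  | fwd m hv he _ ih => exact .fwd _ hv he ih
  | back m hv he _ ih =>
    rename_i v' w' hh'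
    cases m
    · exact .back _ (by simpa using hv) he ih
    · have hcol : colAn G C v' := by simpa using hv
      obtain ⟨d, hd, hrtg⟩ := hcol
      by_cases hvC : v' ∈ C
      · exact .back _ (by simpa using hvC) he ih
      · exact AW.det hd hrtg (.back _ (by simpa using hvC) he ih) true

lemma AWStart.anToSt {G : EdgeSet V} {C : Finset V} {a b : V}
    (h : AWStart G C (colAn G C) a b) : AWStart G C (· ∈ C) a b := by
  obtain ⟨w, ⟨he, haw⟩ | ⟨he, haw⟩⟩ := h
  · exact ⟨w, Or.inl ⟨he, haw.anToSt⟩⟩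
  · exact ⟨w, Or.inr ⟨he, haw.anToSt⟩⟩

def Wk (G : EdgeSet V) (C : Finset V) (col : V → Prop) : Bool → List V → Prop
  | _, [] => True
  | _, [_] => True
  | m, x :: w :: r =>
      (x ∉ C ∧ (x, w) ∈ G ∧ Wk G C col true (w :: r)) ∨
      ((if m then col x else x ∉ C) ∧ (w, x) ∈ G ∧ Wk G C col false (w :: r))

lemma wk_to_aw {G : EdgeSet V} {C : Finset V} {col : V → Prop} {b : V} :
    ∀ (l : List V) (x : V) (m : Bool), Wk G C col m (x :: l) →
      (x :: l).getLast (by simp) = b → AW G C col b x m := by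
  intro l
  induction l with
  | nil =>
    intro x m _ hlast
    simp at hlast
    subst hlast
    exact .base _
  | cons w r ih =>
    intro x m hwk hlast
    have hlast' : (w :: r).getLast (by simp) = b := by
      rw [List.getLast_cons (by simp)] at hlast
      exact hlast
    simp only [Wk] at hwk
    rcases hwk with ⟨hx, he, hwk⟩ | ⟨hx, he, hwk⟩
    · exact .fwd _ hx he (ih _ _ hwk hlast')
    · exact .back _ hx he (ih _ _ hwk hlast')

lemma aw_to_wk {G : EdgeSet V} {C : Finset V} {col : V → Prop} {b v : V} {m : Bool}
    (h : AW G C col b v m) :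
    ∃ l, Wk G C col m (v :: l) ∧ (v :: l).getLast (by simp) = b := by
  induction h with
  | base m => exact ⟨[], trivial, by simp⟩
  | fwd m hv he h ih =>
    rename_i v' w'
    obtain ⟨l, hwk, hlast⟩ := ih
    refine ⟨w' :: l, ?_, ?_⟩
    · simp only [Wk]
      exact Or.inl ⟨hv, he, hwk⟩
    · rw [List.getLast_cons (by simp)]
      exact hlast
  | back m hv he h ih =>
    rename_i v' w'
    obtain ⟨l, hwk, hlast⟩ := ih
    refine ⟨w' :: l, ?_, ?_⟩
    · simp only [Wk]
      exact Or.inr ⟨hv, he, hwk⟩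
    · rw [List.getLast_cons (by simp)]
      exact hlast

lemma triple_of_wk {G : EdgeSet V} {C : Finset V} (no2 : ∀ x y : V, (x, y) ∈ G → (y, x) ∉ G)
    {prev x z : V} {s : List V} {m : Bool}
    (harr : ((prev, x) ∈ G ∧ m = true) ∨ ((x, prev) ∈ G ∧ m = false))
    (hwk : Wk G C (· ∈ C) m (x :: z :: s)) : ActiveTriple G C prev x z := by
  simp only [Wk] at hwk
  rcases hwk with ⟨hxC, hxz, _⟩ | ⟨hcond, hzx, _⟩
  · exact Or.inr ⟨fun hc => no2 _ _ hxz hc.2, hxC⟩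
  · rcases harr with ⟨hpx, rfl⟩ | ⟨hxp, rfl⟩
    · simp only [if_true] at hcond
      exact Or.inl ⟨⟨hpx, hzx⟩, ⟨x, hcond, Relation.ReflTransGen.refl⟩⟩
    · simp at hcond
      exact Or.inr ⟨fun hc => no2 _ _ hxp hc.1, hcond⟩

lemma cond_of_triple {G : EdgeSet V} {C : Finset V} (no2 : ∀ x y : V, (x, y) ∈ G → (y, x) ∉ G)
    {prev x z : V} {m : Bool}
    (harr : ((prev, x) ∈ G ∧ m = true) ∨ ((x, prev) ∈ G ∧ m = false))
    (ht : ActiveTriple G C prev x z) :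
    ((z, x) ∈ G → m = true → colAn G C x) ∧ (((x, z) ∈ G ∨ m = false) → x ∉ C) := by
  constructor
  · intro hzx hm
    rcases harr with ⟨hpx, _⟩ | ⟨hxp, hmf⟩
    · rcases ht with ⟨_, hcol⟩ | ⟨hnc, _⟩
      · exact hcol
      · exact absurd ⟨hpx, hzx⟩ hnc
    · rw [hmf] at hm; simp at hm
  · intro hor
    have hnpx : ¬ IsCollider G prev x z → x ∉ C := by
      intro hnc
      rcases ht with ⟨hc, _⟩ | ⟨_, hx⟩
      · exact absurd hc hnc
      · exact hx
    rcases hor with hxz | hmf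
    · exact hnpx (fun hc => no2 _ _ hxz hc.2)
    · rcases harr with ⟨_, hmt⟩ | ⟨hxp, _⟩
      · rw [hmf] at hmt; simp at hmt
      · exact hnpx (fun hc => no2 _ _ hxp hc.1)

lemma edge_shift {G : EdgeSet V} {x : V} {l : List V}
    (hedge : ∀ (i : ℕ) (h : i + 1 < (x :: l).length),
        Adj G ((x :: l).get ⟨i, by omega⟩) ((x :: l).get ⟨i + 1, h⟩) ∨
        Adj G ((x :: l).get ⟨i + 1, h⟩) ((x :: l).get ⟨i, by omega⟩)) :
    ∀ (i : ℕ) (h : i + 1 < l.length),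
        Adj G (l.get ⟨i, by omega⟩) (l.get ⟨i + 1, h⟩) ∨
        Adj G (l.get ⟨i + 1, h⟩) (l.get ⟨i, by omega⟩) := by
  intro i h
  have h2 : (i + 1) + 1 < (x :: l).length := by simp; omega
  have h3 := hedge (i + 1) h2
  simpa using h3

lemma triple_shift {G : EdgeSet V} {C : Finset V} {x : V} {l : List V}
    (htrip : ∀ (i : ℕ) (h : i + 2 < (x :: l).length),
        ActiveTriple G C ((x :: l).get ⟨i, by omega⟩) ((x :: l).get ⟨i + 1, by omega⟩)
          ((x :: l).get ⟨i + 2, h⟩)) :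
    ∀ (i : ℕ) (h : i + 2 < l.length),
        ActiveTriple G C (l.get ⟨i, by omega⟩) (l.get ⟨i + 1, by omega⟩) (l.get ⟨i + 2, h⟩) := by
  intro i h
  have h2 : (i + 1) + 2 < (x :: l).length := by simp; omega
  have h3 := htrip (i + 1) h2
  simpa using h3

lemma toWk {G : EdgeSet V} {C : Finset V} (no2 : ∀ x y : V, (x, y) ∈ G → (y, x) ∉ G) :
    ∀ (l : List V) (m : Bool),
    (∀ (i : ℕ) (h : i + 1 < l.length),
        Adj G (l.get ⟨i, by omega⟩) (l.get ⟨i + 1, h⟩) ∨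
        Adj G (l.get ⟨i + 1, h⟩) (l.get ⟨i, by omega⟩)) →
    (∀ (i : ℕ) (h : i + 2 < l.length),
        ActiveTriple G C (l.get ⟨i, by omega⟩) (l.get ⟨i + 1, by omega⟩) (l.get ⟨i + 2, h⟩)) →
    (∀ x w r, l = x :: w :: r →
        (((w, x) ∈ G → m = true → colAn G C x) ∧ (((x, w) ∈ G ∨ m = false) → x ∉ C))) →
    Wk G C (colAn G C) m l := by
  intro l
  induction l with
  | nil => intro m _ _ _; trivial
  | cons x l ih =>
    cases l with
    | nil => intro m _ _ _; trivial
    | cons w r =>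
      intro m hedge htrip hc
      obtain ⟨hc1, hc2⟩ := hc x w r rfl
      have he0 : (x, w) ∈ G ∨ (w, x) ∈ G := by
        have := hedge 0 (by simp)
        simpa [Adj] using this
      have htrip0 : ∀ z s, r = z :: s → ActiveTriple G C x w z := by
        intro z s hr
        subst hr
        have h3 := htrip 0 (by simp)
        simpa using h3
      simp only [Wk]
      by_cases hfwd : (x, w) ∈ G
      · refine Or.inl ⟨hc2 (Or.inl hfwd), hfwd,
          ih true (edge_shift hedge) (triple_shift htrip) ?_⟩
        intro y z s heq
        injection heq with hy heq
        subst hy; subst heq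
        exact cond_of_triple no2 (Or.inl ⟨hfwd, rfl⟩) (htrip0 z s rfl)
      · have hback : (w, x) ∈ G := by
          rcases he0 with h | h
          · exact absurd h hfwd
          · exact h
        refine Or.inr ⟨?_, hback, ih false (edge_shift hedge) (triple_shift htrip) ?_⟩
        · cases m
          · simpa using hc2 (Or.inr rfl)
          · simpa using hc1 hback rfl
        · intro y z s heq
          injection heq with hy heq
          subst hy; subst heq
          exact cond_of_triple no2 (Or.inr ⟨hback, rfl⟩) (htrip0 z s rfl)

lemma dconn_to_awstart {G : EdgeSet V} {C : Finset V} {a b : V}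
    (no2 : ∀ x y : V, (x, y) ∈ G → (y, x) ∉ G) (h : DConn G C a b) :
    AWStart G C (colAn G C) a b := by
  obtain ⟨p, hlen, hhead, hlast, hedge, htrip⟩ := h
  obtain ⟨w, r, rfl⟩ : ∃ w r, p = a :: w :: r := by
    cases p with
    | nil => simp at hlen
    | cons a' t =>
      cases t with
      | nil => simp at hlen
      | cons w r =>
        have ha : a' = a := by simpa using hhead
        exact ⟨w, r, by rw [ha]⟩
  have hlast' : (w :: r).getLast (by simp) = b := by
    rw [List.getLast?_cons_cons, List.getLast?_eq_getLast (l := w :: r) (by simp)] at hlast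
    simpa using hlast
  have he0 : (a, w) ∈ G ∨ (w, a) ∈ G := by
    have := hedge 0 (by simp)
    simpa [Adj] using this
  cases r with
  | nil =>
    have hw : w = b := by simpa using hlast'
    rcases he0 with h | h
    · exact ⟨w, Or.inl ⟨h, by rw [hw]; exact .base _⟩⟩
    · exact ⟨w, Or.inr ⟨h, by rw [hw]; exact .base _⟩⟩
  | cons z r' =>
    have htrip0 : ActiveTriple G C a w z := by
      have h3 := htrip 0 (by simp)
      simpa using h3
    by_cases hfwd : (a, w) ∈ G
    · have hwk := toWk no2 (w :: z :: r') true (edge_shift hedge) (triple_shift htrip) ?_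
      · exact ⟨w, Or.inl ⟨hfwd, wk_to_aw _ _ _ hwk hlast'⟩⟩
      · intro y z' s heq
        injection heq with h1 heq
        injection heq with h2 h3
        subst h1; subst h2; subst h3
        exact cond_of_triple no2 (Or.inl ⟨hfwd, rfl⟩) htrip0
    · have hback : (w, a) ∈ G := by
        rcases he0 with h | h
        · exact absurd h hfwd
        · exact h
      have hwk := toWk no2 (w :: z :: r') false (edge_shift hedge) (triple_shift htrip) ?_
      · exact ⟨w, Or.inr ⟨hback, wk_to_aw _ _ _ hwk hlast'⟩⟩
      · intro y z' s heq
        injection heq with h1 heq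
        injection heq with h2 h3
        subst h1; subst h2; subst h3
        exact cond_of_triple no2 (Or.inr ⟨hback, rfl⟩) htrip0

lemma wk_edges {G : EdgeSet V} {C : Finset V} {col : V → Prop} :
    ∀ (l : List V) (x : V) (m : Bool), Wk G C col m (x :: l) →
    ∀ (i : ℕ) (h : i + 1 < (x :: l).length),
      Adj G ((x :: l).get ⟨i, by omega⟩) ((x :: l).get ⟨i + 1, h⟩) ∨
      Adj G ((x :: l).get ⟨i + 1, h⟩) ((x :: l).get ⟨i, by omega⟩) := by
  intro l
  induction l with
  | nil => intro x m _ i h; simp at h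
  | cons w r ih =>
    intro x m hwk i h
    simp only [Wk] at hwk
    cases i with
    | zero =>
      have hstep : (x, w) ∈ G ∨ (w, x) ∈ G := by
        rcases hwk with ⟨_, he, _⟩ | ⟨_, he, _⟩
        exacts [Or.inl he, Or.inr he]
      simpa [Adj] using hstep
    | succ i =>
      have htail : ∃ m', Wk G C col m' (w :: r) := by
        rcases hwk with ⟨_, _, h'⟩ | ⟨_, _, h'⟩
        exacts [⟨_, h'⟩, ⟨_, h'⟩]
      obtain ⟨m', h'⟩ := htail
      have h4 := ih w m' h' i (by simp at h ⊢; omega)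
      simpa using h4

lemma wk_triples {G : EdgeSet V} {C : Finset V}
    (no2 : ∀ x y : V, (x, y) ∈ G → (y, x) ∉ G) :
    ∀ (l : List V) (x : V) (m : Bool), Wk G C (· ∈ C) m (x :: l) →
    ∀ (i : ℕ) (h : i + 2 < (x :: l).length),
      ActiveTriple G C ((x :: l).get ⟨i, by omega⟩) ((x :: l).get ⟨i + 1, by omega⟩)
        ((x :: l).get ⟨i + 2, h⟩) := by
  intro l
  induction l with
  | nil => intro x m _ i h; simp at h
  | cons w r ih =>
    intro x m hwk i h
    have hwk' := hwk
    simp only [Wk] at hwk'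
    cases i with
    | zero =>
      cases r with
      | nil => simp at h
      | cons z s =>
        have ht : ActiveTriple G C x w z := by
          rcases hwk' with ⟨hxC, hxw, h'⟩ | ⟨hcond, hwx, h'⟩
          · exact triple_of_wk no2 (Or.inl ⟨hxw, rfl⟩) h'
          · exact triple_of_wk no2 (Or.inr ⟨hwx, rfl⟩) h'
        simpa using ht
    | succ i =>
      have htail : ∃ m', Wk G C (· ∈ C) m' (w :: r) := by
        rcases hwk' with ⟨_, _, h'⟩ | ⟨_, _, h'⟩
        exacts [⟨_, h'⟩, ⟨_, h'⟩]
      obtain ⟨m', h'⟩ := htail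
      have h4 := ih w m' h' i (by simp at h ⊢; omega)
      simpa using h4

lemma awstart_to_dconn {G : EdgeSet V} {C : Finset V} {a b : V}
    (no2 : ∀ x y : V, (x, y) ∈ G → (y, x) ∉ G)
    (h : AWStart G C (· ∈ C) a b) : DConn G C a b := by
  obtain ⟨v, hstart⟩ := h
  have hm : ∃ m, (((a, v) ∈ G ∧ m = true) ∨ ((v, a) ∈ G ∧ m = false)) ∧
      AW G C (· ∈ C) b v m := by
    rcases hstart with ⟨he, haw⟩ | ⟨he, haw⟩
    exacts [⟨true, Or.inl ⟨he, rfl⟩, haw⟩, ⟨false, Or.inr ⟨he, rfl⟩, haw⟩]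
  obtain ⟨m, harr, haw⟩ := hm
  obtain ⟨l, hwk, hlast⟩ := aw_to_wk haw
  refine ⟨a :: v :: l, by simp, by simp, ?_, ?_, ?_⟩
  · rw [List.getLast?_cons_cons, List.getLast?_eq_getLast (l := v :: l) (by simp), hlast]
  · intro i hlen
    cases i with
    | zero =>
      have hstep : (a, v) ∈ G ∨ (v, a) ∈ G := by
        rcases harr with ⟨he, _⟩ | ⟨he, _⟩
        exacts [Or.inl he, Or.inr he]
      simpa [Adj] using hstep
    | succ i =>
      have h4 := wk_edges l v m hwk i (by simp at hlen ⊢; omega)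
      simpa using h4
  · intro i hlen
    cases i with
    | zero =>
      cases l with
      | nil => simp at hlen
      | cons z s =>
        have ht : ActiveTriple G C a v z := triple_of_wk no2 harr hwk
        simpa using ht
    | succ i =>
      have h4 := wk_triples no2 l v m hwk i (by simp at hlen ⊢; omega)
      simpa using h4

section CoveredSim

variable {E H : EdgeSet V} {C : Finset V} {j k b : V} {Pa : Finset V}

lemma M3 (hjk : (j, k) ∈ E) (hpaj : ∀ x, (x, j) ∈ E ↔ x ∈ Pa)
    (hpak : ∀ x, (x, k) ∈ E ↔ x ∈ Pa ∨ x = j)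
    (hkC : k ∉ C) (h : AW E C (· ∈ C) b j true) : AW E C (· ∈ C) b k false := by
  cases h with
  | base => exact .back _ (by simpa using hkC) hjk (.base _)
  | fwd m hv he h => exact .back _ (by simpa using hkC) hjk (.fwd _ hv he h)
  | back m hv he h =>
    exact .back _ (by simpa using hkC) ((hpak _).2 (Or.inl ((hpaj _).1 he))) h

lemma M5 (hjk : (j, k) ∈ E) (hpaj : ∀ x, (x, j) ∈ E ↔ x ∈ Pa)
    (hpak : ∀ x, (x, k) ∈ E ↔ x ∈ Pa ∨ x = j)
    (hjC : j ∉ C) (h : AW E C (· ∈ C) b k false) : AW E C (· ∈ C) b j false := by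
  cases h with
  | base => exact .fwd _ hjC hjk (.base _)
  | fwd m hv he h => exact .fwd _ hjC hjk (.fwd _ hv he h)
  | back m hv he h =>
    rcases (hpak _).1 he with hw | hw
    · exact .back _ (by simpa using hjC) ((hpaj _).2 hw) h
    · rw [hw] at h; exact h

lemma M6 (hpaj : ∀ x, (x, j) ∈ E ↔ x ∈ Pa)
    (hpak : ∀ x, (x, k) ∈ E ↔ x ∈ Pa ∨ x = j)
    (hjC : j ∈ C) (h : AW E C (· ∈ C) b k false) :
    AW E C (· ∈ C) b j true ∨ AW E C (· ∈ C) b k true := by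
  cases h with
  | base => exact Or.inr (.base _)
  | fwd m hv he h => exact Or.inr (.fwd _ hv he h)
  | back m hv he h =>
    rcases (hpak _).1 he with hw | hw
    · exact Or.inl (.back _ (by simpa using hjC) ((hpaj _).2 hw) h)
    · rw [hw] at h
      exact Or.inl (h.toTrue hjC _)

lemma aw_start_of_ne {G : EdgeSet V} {col : V → Prop} {v : V} {m : Bool}
    (h : AW G C col b v m) (hvb : v ≠ b) : AWStart G C col v b := by
  cases h with
  | base => exact absurd rfl hvb
  | fwd m hv he h => exact ⟨_, Or.inl ⟨he, h⟩⟩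
  | back m hv he h => exact ⟨_, Or.inr ⟨he, h⟩⟩

lemma S3 (hjk : (j, k) ∈ E) (hpaj : ∀ x, (x, j) ∈ E ↔ x ∈ Pa)
    (hpak : ∀ x, (x, k) ∈ E ↔ x ∈ Pa ∨ x = j)
    (h : AW E C (· ∈ C) b j true) : AWStart E C (· ∈ C) k b := by
  cases h with
  | base => exact ⟨j, Or.inr ⟨hjk, .base _⟩⟩
  | fwd m hv he h => exact ⟨j, Or.inr ⟨hjk, .fwd _ hv he h⟩⟩
  | back m hv he h => exact ⟨_, Or.inr ⟨(hpak _).2 (Or.inl ((hpaj _).1 he)), h⟩⟩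

lemma S5s (hjk : (j, k) ∈ E) (hpaj : ∀ x, (x, j) ∈ E ↔ x ∈ Pa)
    (hpak : ∀ x, (x, k) ∈ E ↔ x ∈ Pa ∨ x = j)
    (hjb : j ≠ b) (h : AW E C (· ∈ C) b k false) : AWStart E C (· ∈ C) j b := by
  cases h with
  | base => exact ⟨k, Or.inl ⟨hjk, .base _⟩⟩
  | fwd m hv he h => exact ⟨k, Or.inl ⟨hjk, .fwd _ hv he h⟩⟩
  | back m hv he h =>
    rcases (hpak _).1 he with hw | hw
    · exact ⟨_, Or.inr ⟨(hpaj _).2 hw, h⟩⟩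
    · rw [hw] at h
      exact aw_start_of_ne h hjb

lemma mainAW (hjk : (j, k) ∈ E) (hpaj : ∀ x, (x, j) ∈ E ↔ x ∈ Pa)
    (hpak : ∀ x, (x, k) ∈ E ↔ x ∈ Pa ∨ x = j)
    (hjPa : j ∉ Pa) (hkPa : k ∉ Pa) (hjk' : j ≠ k)
    (hHmem : ∀ x y : V, (x, y) ∈ H ↔ ((x, y) ∈ E ∧ (x, y) ≠ (j, k)) ∨ (x, y) = (k, j))
    {v : V} {m : Bool} (h : AW H C (· ∈ C) b v m) :
    ((v ≠ j ∧ v ≠ k → AW E C (· ∈ C) b v m) ∧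
     ((v = j ∨ v = k) → m = true → AW E C (· ∈ C) b j true ∨ AW E C (· ∈ C) b k true) ∧
     (v = k → m = false → AW E C (· ∈ C) b k false) ∧
     (v = j → m = false → AW E C (· ∈ C) b j false)) := by
  induction h with
  | base m =>
    refine ⟨fun _ => .base _, fun hv _ => ?_, fun hv _ => by rw [← hv]; exact .base _,
      fun hv _ => by rw [← hv]; exact .base _⟩
    rcases hv with rfl | rfl
    · exact Or.inl (.base _)
    · exact Or.inr (.base _)
  | fwd m hv hHe h ih =>
    rename_i v' w'
    rcases (hHmem _ _).1 hHe with ⟨heE, hne⟩ | heq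
    · by_cases hwj : w' = j
      · subst w'
        have hvPa : v' ∈ Pa := (hpaj _).1 heE
        have hd := ih.2.1 (Or.inl rfl) rfl
        have hgo : AW E C (· ∈ C) b v' m := by
          rcases hd with hj | hk
          · exact .fwd _ hv ((hpaj _).2 hvPa) hj
          · exact .fwd _ hv ((hpak _).2 (Or.inl hvPa)) hk
        refine ⟨fun _ => hgo, ?_, ?_, ?_⟩
        · rintro (rfl | rfl) _
          · exact absurd hvPa hjPa
          · exact absurd hvPa hkPa
        · rintro rfl _; exact absurd hvPa hkPa
        · rintro rfl _; exact absurd hvPa hjPa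
      · by_cases hwk : w' = k
        · subst w'
          have hvj : v' ≠ j := fun hvj => hne (by rw [hvj])
          have hvPa : v' ∈ Pa := by
            rcases (hpak _).1 heE with h' | h'
            · exact h'
            · exact absurd h' hvj
          have hd := ih.2.1 (Or.inr rfl) rfl
          have hgo : AW E C (· ∈ C) b v' m := by
            rcases hd with hj | hk
            · exact .fwd _ hv ((hpaj _).2 hvPa) hj
            · exact .fwd _ hv ((hpak _).2 (Or.inl hvPa)) hk
          refine ⟨fun _ => hgo, ?_, ?_, ?_⟩
          · rintro (rfl | rfl) _
            · exact absurd hvPa hjPa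
            · exact absurd hvPa hkPa
          · rintro rfl _; exact absurd hvPa hkPa
          · rintro rfl _; exact absurd hvPa hjPa
        · have hw := ih.1 ⟨hwj, hwk⟩
          refine ⟨fun _ => .fwd _ hv heE hw, ?_, ?_, ?_⟩
          · rintro (rfl | rfl) _
            · exact Or.inl (.fwd _ hv heE hw)
            · exact Or.inr (.fwd _ hv heE hw)
          · rintro rfl _; exact .fwd _ hv heE hw
          · rintro rfl _; exact .fwd _ hv heE hw
    · injection heq with h1 h2
      subst v'; subst w'
      have hd := ih.2.1 (Or.inl rfl) rfl
      refine ⟨fun hvv => absurd rfl hvv.2, fun _ _ => hd, fun _ hm => ?_,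
        fun h4 _ => absurd h4 (Ne.symm hjk')⟩
      rcases hd with hj | hk
      · exact M3 hjk hpaj hpak hv hj
      · exact hk.toFalse hv
  | back m hv hHe h ih =>
    rename_i v' w'
    rcases (hHmem _ _).1 hHe with ⟨heE, hne⟩ | heq
    · by_cases hvj : v' = j
      · subst v'
        have hwPa : w' ∈ Pa := (hpaj _).1 heE
        have hwj : w' ≠ j := fun hh => hjPa (hh ▸ hwPa)
        have hwk : w' ≠ k := fun hh => hkPa (hh ▸ hwPa)
        have hw := ih.1 ⟨hwj, hwk⟩
        have hgo : AW E C (· ∈ C) b j m := .back _ hv ((hpaj _).2 hwPa) hw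
        refine ⟨fun hvv => absurd rfl hvv.1, ?_, ?_, ?_⟩
        · rintro _ rfl; exact Or.inl hgo
        · intro h3 _; exact absurd h3 hjk'
        · intro _ hm; exact hm ▸ hgo
      · by_cases hvk : v' = k
        · subst v'
          have hwj : w' ≠ j := fun hh => hne (by rw [hh])
          have hwPa : w' ∈ Pa := by
            rcases (hpak _).1 heE with h' | h'
            · exact h'
            · exact absurd h' hwj
          have hwk : w' ≠ k := fun hh => hkPa (hh ▸ hwPa)
          have hw := ih.1 ⟨hwj, hwk⟩
          have hgo : AW E C (· ∈ C) b k m := .back _ hv ((hpak _).2 (Or.inl hwPa)) hw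
          refine ⟨fun hvv => absurd rfl hvv.2, ?_, ?_, ?_⟩
          · rintro _ rfl; exact Or.inr hgo
          · intro _ hm; exact hm ▸ hgo
          · intro h4 _; exact absurd h4 (Ne.symm hjk')
        · have hgo : AW E C (· ∈ C) b v' m := by
            by_cases hwj : w' = j
            · subst w'; exact .back _ hv heE (ih.2.2.2 rfl rfl)
            · by_cases hwk : w' = k
              · subst w'; exact .back _ hv heE (ih.2.2.1 rfl rfl)
              · exact .back _ hv heE (ih.1 ⟨hwj, hwk⟩)
          refine ⟨fun _ => hgo, ?_, fun h3 _ => absurd h3 hvk, fun h4 _ => absurd h4 hvj⟩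
          rintro (rfl | rfl) _
          exacts [absurd rfl hvj, absurd rfl hvk]
    · injection heq with h1 h2
      subst w'; subst v'
      have hd := ih.2.2.1 rfl rfl
      refine ⟨fun hvv => absurd rfl hvv.1, ?_, fun h3 _ => absurd h3 hjk', ?_⟩
      · rintro _ rfl
        exact M6 hpaj hpak (by simpa using hv) hd
      · intro _ hm
        subst hm
        exact M5 hjk hpaj hpak (by simpa using hv) hd

lemma mainStart (hjk : (j, k) ∈ E) (hpaj : ∀ x, (x, j) ∈ E ↔ x ∈ Pa)
    (hpak : ∀ x, (x, k) ∈ E ↔ x ∈ Pa ∨ x = j)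
    (hjPa : j ∉ Pa) (hkPa : k ∉ Pa) (hjk' : j ≠ k)
    (hHmem : ∀ x y : V, (x, y) ∈ H ↔ ((x, y) ∈ E ∧ (x, y) ≠ (j, k)) ∨ (x, y) = (k, j))
    {a : V} (hab : a ≠ b)
    (h : AWStart H C (· ∈ C) a b) : AWStart E C (· ∈ C) a b := by
  obtain ⟨w, ⟨he, haw⟩ | ⟨he, haw⟩⟩ := h
  · have ihw := mainAW hjk hpaj hpak hjPa hkPa hjk' hHmem haw
    rcases (hHmem _ _).1 he with ⟨heE, hne⟩ | heq
    · by_cases hwj : w = j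
      · subst w
        have haPa : a ∈ Pa := (hpaj _).1 heE
        rcases ihw.2.1 (Or.inl rfl) rfl with hj | hk
        · exact ⟨j, Or.inl ⟨(hpaj _).2 haPa, hj⟩⟩
        · exact ⟨k, Or.inl ⟨(hpak _).2 (Or.inl haPa), hk⟩⟩
      · by_cases hwk : w = k
        · subst w
          have haj : a ≠ j := fun hh => hne (by rw [hh])
          have haPa : a ∈ Pa := by
            rcases (hpak _).1 heE with h' | h'
            · exact h'
            · exact absurd h' haj
          rcases ihw.2.1 (Or.inr rfl) rfl with hj | hk
          · exact ⟨j, Or.inl ⟨(hpaj _).2 haPa, hj⟩⟩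
          · exact ⟨k, Or.inl ⟨(hpak _).2 (Or.inl haPa), hk⟩⟩
        · exact ⟨w, Or.inl ⟨heE, ihw.1 ⟨hwj, hwk⟩⟩⟩
    · injection heq with h1 h2
      subst a; subst w
      rcases ihw.2.1 (Or.inl rfl) rfl with hj | hk
      · exact S3 hjk hpaj hpak hj
      · exact aw_start_of_ne hk hab
  · have ihw := mainAW hjk hpaj hpak hjPa hkPa hjk' hHmem haw
    rcases (hHmem _ _).1 he with ⟨heE, hne⟩ | heq
    · by_cases hwj : w = j
      · subst w
        exact ⟨j, Or.inr ⟨heE, ihw.2.2.2 rfl rfl⟩⟩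
      · by_cases hwk : w = k
        · subst w
          exact ⟨k, Or.inr ⟨heE, ihw.2.2.1 rfl rfl⟩⟩
        · exact ⟨w, Or.inr ⟨heE, ihw.1 ⟨hwj, hwk⟩⟩⟩
    · injection heq with h1 h2
      subst w; subst a
      exact S5s hjk hpaj hpak hab (ihw.2.2.1 rfl rfl)

end CoveredSim

end TuckAux

/-- for a covered edge `j → k` of `G_π`, with `H` the result of
reversing `j → k` and `τ = tuck(π, j, k)`: (a) `τ` is a causal order of `H`;
(b) `E(G_τ) ⊆ E(H)`; (c) `|E(G_τ)| ≤ |E(G_π)|`; (d) `I(G_π) ⊆ I(G_τ)`. -/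
theorem tuck_lemma (I : IndepModel V) (hG : Graphoid I)
    (j k : V) (δ₁ δ₂ δ₃ : List V) (π τ : List V)
    (hπ : π = δ₁ ++ j :: (δ₂ ++ k :: δ₃))
    (hτ : τ = δ₁ ++ k :: j :: (δ₂ ++ δ₃))
    (hperm : IsPermList π)
    (hcov : CoveredEdge (RUedges I π) j k)
    (H : EdgeSet V) (hH : H = insert (k, j) ((RUedges I π).erase (j, k))) :
    CausalOrder H τ ∧
    RUedges I τ ⊆ H ∧
    (RUedges I τ).card ≤ (RUedges I π).card ∧
    ISub (RUedges I π) (RUedges I τ) := by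
  classical
  obtain ⟨hjkE, hcovPar⟩ := hcov
  -- permutation facts
  have hπτ : π.Perm τ := by
    rw [hπ, hτ]
    exact List.Perm.append_left δ₁
      ((List.Perm.cons j List.perm_middle).trans (List.Perm.swap k j _))
  have hτperm : IsPermList τ :=
    ⟨hπτ.nodup_iff.1 hperm.1, fun v => hπτ.mem_iff.1 (hperm.2 v)⟩
  -- nodup facts
  have hπ' : π = (δ₁ ++ j :: δ₂) ++ k :: δ₃ := by rw [hπ]; simp
  have hkpre : k ∉ δ₁ ++ j :: δ₂ := nodup_split_not_mem (hπ' ▸ hperm.1)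
  have hkδ₁ : k ∉ δ₁ := fun h => hkpre (by simp [h])
  have hjk' : j ≠ k := fun h => hkpre (by simp [h])
  have hkδ₂ : k ∉ δ₂ := fun h => hkpre (by simp [h])
  have hjδ₁ : j ∉ δ₁ := nodup_split_not_mem (hπ ▸ hperm.1)
  -- pre computations for the special points
  have hpreπk : pre π k = (δ₁ ++ j :: δ₂).toFinset := by
    rw [hπ']; exact pre_split _ _ _ hkpre
  have hpreπj : pre π j = δ₁.toFinset := by
    rw [hπ]; exact pre_split _ _ _ hjδ₁
  have hpreτk : pre τ k = δ₁.toFinset := by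
    rw [hτ]; exact pre_split _ _ _ hkδ₁
  have hτ' : τ = (δ₁ ++ [k]) ++ j :: (δ₂ ++ δ₃) := by rw [hτ]; simp
  have hpreτj0 : pre τ j = (δ₁ ++ [k]).toFinset := by
    rw [hτ']; exact pre_split _ _ _ (nodup_split_not_mem (hτ' ▸ hτperm.1))
  have hpreτj : pre τ j = insert k δ₁.toFinset := by
    rw [hpreτj0]; ext x; simp [or_comm]
  -- parents facts
  obtain ⟨Pa, hPadef⟩ : ∃ Pa : Finset V, Pa = parents (RUedges I π) j := ⟨_, rfl⟩
  rw [← hPadef] at hcovPar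
  have hpaj : ∀ x, (x, j) ∈ RUedges I π ↔ x ∈ Pa := by
    intro x; rw [hPadef]; exact mem_parents.symm
  have hparK : parents (RUedges I π) k = insert j Pa := by
    rw [hcovPar]
    exact (Finset.insert_erase (mem_parents.2 hjkE)).symm
  have hpak : ∀ x, (x, k) ∈ RUedges I π ↔ x ∈ Pa ∨ x = j := by
    intro x
    rw [← mem_parents, hparK]
    simp [or_comm]
  have hPaD1 : Pa ⊆ δ₁.toFinset := by
    intro x hx
    have h1 := (mem_RUedges.1 ((hpaj x).2 hx)).1
    rwa [hpreπj] at h1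
  have hjPa : j ∉ Pa := fun h => hjδ₁ (by simpa using hPaD1 h)
  have hkPa : k ∉ Pa := fun h => hkδ₁ (by simpa using hPaD1 h)
  -- H membership
  have hkjE : (k, j) ∉ RUedges I π := fun h => hkδ₁ (by
    have h1 := (mem_RUedges.1 h).1
    rw [hpreπj] at h1
    simpa using h1)
  have hHmem : ∀ x y : V, (x, y) ∈ H ↔
      (((x, y) ∈ RUedges I π ∧ (x, y) ≠ (j, k)) ∨ (x, y) = (k, j)) := by
    intro x y
    rw [hH]
    simp only [Finset.mem_insert, Finset.mem_erase]
    constructor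
    · rintro (h | ⟨h1, h2⟩)
      · exact Or.inr h
      · exact Or.inl ⟨h2, h1⟩
    · rintro (⟨h1, h2⟩ | h)
      · exact Or.inr ⟨h2, h1⟩
      · exact Or.inl h
  -- pre comparisons by region
  have hsplitδ₁ : ∀ y ∈ δ₁, pre τ y = pre π y := by
    intro y hy
    obtain ⟨s, t, hst⟩ := List.append_of_mem hy
    have hπy : π = s ++ y :: (t ++ j :: (δ₂ ++ k :: δ₃)) := by rw [hπ, hst]; simp
    have hτy : τ = s ++ y :: (t ++ k :: j :: (δ₂ ++ δ₃)) := by rw [hτ, hst]; simp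
    rw [hπy, hτy, pre_split _ _ _ (nodup_split_not_mem (hπy ▸ hperm.1)),
      pre_split _ _ _ (nodup_split_not_mem (hτy ▸ hτperm.1))]
  have hsplitδ₃ : ∀ y ∈ δ₃, pre τ y = pre π y := by
    intro y hy
    obtain ⟨s, t, hst⟩ := List.append_of_mem hy
    have hπy : π = (δ₁ ++ j :: (δ₂ ++ k :: s)) ++ y :: t := by rw [hπ, hst]; simp
    have hτy : τ = (δ₁ ++ k :: j :: (δ₂ ++ s)) ++ y :: t := by rw [hτ, hst]; simp
    rw [hπy, hτy, pre_split _ _ _ (nodup_split_not_mem (hτy ▸ hτperm.1)),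
      pre_split _ _ _ (nodup_split_not_mem (hπy ▸ hperm.1))]
    ext x; simp; try tauto
  have hsplitδ₂ : ∀ y ∈ δ₂, ∃ s t : List V, δ₂ = s ++ y :: t ∧
      pre π y = (δ₁ ++ j :: s).toFinset ∧ pre τ y = insert k (pre π y) := by
    intro y hy
    obtain ⟨s, t, hst⟩ := List.append_of_mem hy
    have hπy : π = (δ₁ ++ j :: s) ++ y :: (t ++ k :: δ₃) := by rw [hπ, hst]; simp
    have hτy : τ = (δ₁ ++ k :: j :: s) ++ y :: (t ++ δ₃) := by rw [hτ, hst]; simp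
    have h1 : pre π y = (δ₁ ++ j :: s).toFinset := by
      rw [hπy]; exact pre_split _ _ _ (nodup_split_not_mem (hπy ▸ hperm.1))
    have h2 : pre τ y = (δ₁ ++ k :: j :: s).toFinset := by
      rw [hτy]; exact pre_split _ _ _ (nodup_split_not_mem (hτy ▸ hτperm.1))
    refine ⟨s, t, hst, h1, ?_⟩
    rw [h1, h2]
    ext x; simp; try tauto
  -- part (a): every edge of H goes forward in τ
  have hHfwd : ∀ x y : V, (x, y) ∈ H → x ∈ pre τ y := by
    intro x y hxy
    rcases (hHmem x y).1 hxy with ⟨hE, hne⟩ | heq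
    · have hxpre := (mem_RUedges.1 hE).1
      have hy := hperm.2 y
      rw [hπ] at hy
      simp only [List.mem_append, List.mem_cons] at hy
      rcases hy with hy1 | rfl | hy2 | rfl | hy3
      · rwa [hsplitδ₁ y hy1]
      · rw [hpreτj]
        rw [hpreπj] at hxpre
        exact Finset.mem_insert_of_mem hxpre
      · obtain ⟨s, t, hst, h1, h2⟩ := hsplitδ₂ y hy2
        rw [h2]
        exact Finset.mem_insert_of_mem hxpre
      · rw [hpreτk]
        have hx' : x ∈ Pa ∨ x = j := (hpak x).1 hE
        have hxj : x ≠ j := fun h => hne (by rw [h])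
        rcases hx' with h | h
        · exact hPaD1 h
        · exact absurd h hxj
      · rwa [hsplitδ₃ y hy3]
    · injection heq with h1 h2
      subst h1; subst h2
      rw [hpreτj]
      exact Finset.mem_insert_self _ _
  have hcausal : CausalOrder H τ := by
    refine ⟨hτperm, fun x y hxy => ?_⟩
    induction hxy with
    | single h => exact indexOf_lt_of_mem_pre (hHfwd _ _ h)
    | tail h1 h2 ih => exact lt_trans ih (indexOf_lt_of_mem_pre (hHfwd _ _ h2))
  -- no-2-cycle facts
  have no2H : ∀ x y : V, (x, y) ∈ H → (y, x) ∉ H := by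
    intro x y h1 h2
    exact absurd (indexOf_lt_of_mem_pre (hHfwd _ _ h2))
      (not_lt_of_gt (indexOf_lt_of_mem_pre (hHfwd _ _ h1)))
  have no2E : ∀ x y : V, (x, y) ∈ RUedges I π → (y, x) ∉ RUedges I π := by
    intro x y h1 h2
    exact absurd (indexOf_lt_of_mem_pre (mem_RUedges.1 h2).1)
      (not_lt_of_gt (indexOf_lt_of_mem_pre (mem_RUedges.1 h1).1))
  have no2F : ∀ x y : V, (x, y) ∈ RUedges I τ → (y, x) ∉ RUedges I τ := by
    intro x y h1 h2
    exact absurd (indexOf_lt_of_mem_pre (mem_RUedges.1 h2).1)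
      (not_lt_of_gt (indexOf_lt_of_mem_pre (mem_RUedges.1 h1).1))
  -- graphoid machinery for part (b)
  have hijPaPk : insert j Pa ⊆ pre π k := by
    intro x hx
    rw [hpreπk]
    rcases Finset.mem_insert.1 hx with rfl | hx'
    · simp
    · have := hPaD1 hx'
      simp only [List.mem_toFinset] at this ⊢
      simp [this]
  have HK : (pre π k \ insert j Pa).Nonempty →
      I {k} (pre π k \ insert j Pa) (insert j Pa) := by
    intro hne
    have hcond : ∀ d ∈ pre π k \ insert j Pa, I {k} {d} (pre π k \ {d}) := by
      intro d hd
      obtain ⟨hdP, hdnp⟩ := Finset.mem_sdiff.1 hd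
      have hnotE : (d, k) ∉ RUedges I π := by
        intro h
        exact hdnp (Finset.mem_insert.2 (Or.symm ((hpak d).1 h)))
      rw [mem_RUedges] at hnotE
      push_neg at hnotE
      have hI := hnotE hdP
      have := hG.symm _ _ _ hI
      rwa [Finset.erase_eq] at this
    have h1 := graphoid_fold hG k _ _ Finset.sdiff_subset hne hcond
    have h2 : pre π k \ (pre π k \ insert j Pa) = insert j Pa := by
      rw [Finset.sdiff_sdiff_self_left]
      exact Finset.inter_eq_right.2 hijPaPk
    rwa [h2] at h1
  have L1 : ∀ S T : Finset V, S ⊆ pre π k → (∀ x ∈ S, x ∉ insert j Pa) →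
      insert j Pa ⊆ T → T ⊆ pre π k → (∀ x ∈ S, x ∉ T) → S.Nonempty →
      I {k} S T := by
    intro S T hS hSnp hT1 hT2 hST hSne
    obtain ⟨s0, hs0⟩ := hSne
    have hk0 := HK ⟨s0, Finset.mem_sdiff.2 ⟨hS hs0, hSnp _ hs0⟩⟩
    have hBsub : S ∪ (T \ insert j Pa) ⊆ pre π k \ insert j Pa := by
      intro x hx
      rcases Finset.mem_union.1 hx with hx' | hx'
      · exact Finset.mem_sdiff.2 ⟨hS hx', hSnp _ hx'⟩
      · obtain ⟨h1, h2⟩ := Finset.mem_sdiff.1 hx'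
        exact Finset.mem_sdiff.2 ⟨hT2 h1, h2⟩
    have hsplit : (S ∪ (T \ insert j Pa)) ∪
        ((pre π k \ insert j Pa) \ (S ∪ (T \ insert j Pa))) = pre π k \ insert j Pa :=
      Finset.union_sdiff_of_subset hBsub
    have h2 := (hG.decomposition {k} (S ∪ (T \ insert j Pa)) _ (insert j Pa)
      (by rw [hsplit]; exact hk0)).1
    have h3 : I {k} ((S ∪ (T \ insert j Pa))) (insert j Pa) := h2
    have h4 : I {k} S (insert j Pa ∪ (T \ insert j Pa)) := by
      have := hG.weakUnion {k} S (T \ insert j Pa) (insert j Pa) (by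
        have heq : S ∪ (T \ insert j Pa) = S ∪ (T \ insert j Pa) := rfl
        exact h3)
      exact this
    have h5 : insert j Pa ∪ (T \ insert j Pa) = T := by
      rw [Finset.union_sdiff_self_eq_union]
      exact Finset.union_eq_right.2 hT1
    rwa [h5] at h4
  have HJ : (δ₁.toFinset \ Pa).Nonempty → I {j} (δ₁.toFinset \ Pa) Pa := by
    intro hne
    have hcond : ∀ d ∈ δ₁.toFinset \ Pa, I {j} {d} (δ₁.toFinset \ {d}) := by
      intro d hd
      obtain ⟨hdP, hdnp⟩ := Finset.mem_sdiff.1 hd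
      have hnotE : (d, j) ∉ RUedges I π := fun h => hdnp ((hpaj d).1 h)
      rw [mem_RUedges] at hnotE
      push_neg at hnotE
      have hI := hnotE (by rwa [hpreπj])
      have h2 := hG.symm _ _ _ hI
      rwa [Finset.erase_eq, hpreπj] at h2
    have h1 := graphoid_fold hG j _ _ Finset.sdiff_subset hne hcond
    have h2 : δ₁.toFinset \ (δ₁.toFinset \ Pa) = Pa := by
      rw [Finset.sdiff_sdiff_self_left]
      exact Finset.inter_eq_right.2 hPaD1
    rwa [h2] at h1
  -- combined independence for targets j, k
  have HJK : ∀ x, x ∈ δ₁.toFinset \ Pa →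
      I {x} {j} (insert k (δ₁.toFinset.erase x)) ∧ I {x} {k} (δ₁.toFinset.erase x) := by
    intro x hx
    have hD1Pk : δ₁.toFinset ⊆ pre π k := by
      intro z hz
      rw [hpreπk]
      simp only [List.mem_toFinset] at hz ⊢
      simp [hz]
    have hk1 : I {k} (δ₁.toFinset \ Pa) (insert j Pa) := by
      refine L1 _ _ (fun z hz => hD1Pk (Finset.mem_sdiff.1 hz).1) ?_ (le_refl _)
        hijPaPk ?_ ⟨x, hx⟩
      · intro z hz
        obtain ⟨hz1, hz2⟩ := Finset.mem_sdiff.1 hz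
        intro hmem
        rcases Finset.mem_insert.1 hmem with rfl | h
        · exact hjδ₁ (by simpa using hz1)
        · exact hz2 h
      · intro z hz
        obtain ⟨hz1, hz2⟩ := Finset.mem_sdiff.1 hz
        intro hmem
        rcases Finset.mem_insert.1 hmem with rfl | h
        · exact hjδ₁ (by simpa using hz1)
        · exact hz2 h
    have hj1 : I {j} (δ₁.toFinset \ Pa) Pa := HJ ⟨x, hx⟩
    have hcontr : I (δ₁.toFinset \ Pa) ({j} ∪ {k}) Pa := by
      refine hG.contraction _ {j} {k} Pa (hG.symm _ _ _ hj1) ?_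
      have h1 := hG.symm _ _ _ hk1
      have h2 : insert j Pa = Pa ∪ {j} := by
        rw [Finset.insert_eq, Finset.union_comm]
      rwa [h2] at h1
    -- split {x} out
    obtain ⟨hxD1, hxPa⟩ := Finset.mem_sdiff.1 hx
    have hsx : δ₁.toFinset \ Pa = {x} ∪ (δ₁.toFinset \ Pa).erase x := by
      rw [← Finset.insert_eq]
      exact (Finset.insert_erase hx).symm
    have h6 : I ({j} ∪ {k}) ({x} ∪ (δ₁.toFinset \ Pa).erase x) Pa := by
      rw [← hsx]; exact hG.symm _ _ _ hcontr
    have h7 : I ({j} ∪ {k}) {x} (Pa ∪ (δ₁.toFinset \ Pa).erase x) :=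
      hG.weakUnion _ _ _ _ h6
    have h8 : I {x} ({j} ∪ {k}) (Pa ∪ (δ₁.toFinset \ Pa).erase x) := hG.symm _ _ _ h7
    have hPR : Pa ∪ (δ₁.toFinset \ Pa).erase x = δ₁.toFinset.erase x := by
      ext z
      simp only [Finset.mem_union, Finset.mem_erase, Finset.mem_sdiff]
      constructor
      · rintro (hz | ⟨hz1, hz2, hz3⟩)
        · exact ⟨fun h => hxPa (h ▸ hz), hPaD1 hz⟩
        · exact ⟨hz1, hz2⟩
      · rintro ⟨hz1, hz2⟩
        by_cases hzPa : z ∈ Pa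
        · exact Or.inl hzPa
        · exact Or.inr ⟨hz1, hz2, hzPa⟩
    rw [hPR] at h8
    constructor
    · have h9 := hG.weakUnion {x} {j} {k} (δ₁.toFinset.erase x) h8
      have h10 : δ₁.toFinset.erase x ∪ {k} = insert k (δ₁.toFinset.erase x) := by
        rw [Finset.union_comm, ← Finset.insert_eq]
      rwa [h10] at h9
    · exact (hG.decomposition {x} {j} {k} _ h8).2
  -- part (b)
  have hkδ₃ : k ∉ δ₃ := by
    have hnd3 : (k :: δ₃).Nodup := (List.nodup_append.1 (hπ' ▸ hperm.1)).2.1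
    exact (List.nodup_cons.1 hnd3).1
  have hFH : RUedges I τ ⊆ H := by
    rintro ⟨x, y⟩ he
    have hx := (mem_RUedges.1 he).1
    have hnI := (mem_RUedges.1 he).2
    have hy := hperm.2 y
    rw [hπ] at hy
    simp only [List.mem_append, List.mem_cons] at hy
    rcases hy with hy1 | hyj | hy2 | hyk' | hy3
    · -- y ∈ δ₁
      rw [hsplitδ₁ y hy1] at hx hnI
      have hyk : y ≠ k := fun h => hkδ₁ (h ▸ hy1)
      exact (hHmem x y).2 (Or.inl ⟨mem_RUedges.2 ⟨hx, hnI⟩,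
        fun h => hyk (congrArg Prod.snd h)⟩)
    · -- y = j
      subst hyj
      rw [hpreτj] at hx hnI
      by_cases hxk : x = k
      · subst hxk
        exact (hHmem x y).2 (Or.inr rfl)
      · have hxD1 : x ∈ δ₁.toFinset := by
          rcases Finset.mem_insert.1 hx with h | h
          · exact absurd h hxk
          · exact h
        by_cases hxPa : x ∈ Pa
        · exact (hHmem x y).2 (Or.inl ⟨(hpaj x).2 hxPa,
            fun h => hjk' (congrArg Prod.snd h)⟩)
        · exfalso
          have hder := (HJK x (Finset.mem_sdiff.2 ⟨hxD1, hxPa⟩)).1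
          have herase : (insert k δ₁.toFinset).erase x = insert k (δ₁.toFinset.erase x) :=
            Finset.erase_insert_of_ne (Ne.symm hxk)
          rw [herase] at hnI
          exact hnI hder
    · -- y ∈ δ₂
      obtain ⟨s, t, hst, hP, hins⟩ := hsplitδ₂ y hy2
      have hπy2 : π = (δ₁ ++ j :: s) ++ y :: (t ++ k :: δ₃) := by rw [hπ, hst]; simp
      have hyL : y ∉ δ₁ ++ j :: s := nodup_split_not_mem (hπy2 ▸ hperm.1)
      have hyj : y ≠ j := fun h => hyL (by simp [h])
      have hyD1 : y ∉ δ₁ := fun h => hyL (by simp [h])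
      have hyk : y ≠ k := fun h => hkδ₂ (h ▸ hy2)
      have hyPre : y ∈ pre π k := by
        rw [hpreπk]
        simp only [List.mem_toFinset, List.mem_append, List.mem_cons]
        exact Or.inr (Or.inr hy2)
      have hynp : y ∉ insert j Pa := by
        intro h
        rcases Finset.mem_insert.1 h with h' | h'
        · exact hyj h'
        · exact hyD1 (by simpa using hPaD1 h')
      have hyP : y ∉ pre π y := by
        rw [hP]
        simp only [List.mem_toFinset, List.mem_append, List.mem_cons]
        simp only [List.mem_append, List.mem_cons] at hyL
        tauto
      have hkP : k ∉ pre π y := by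
        rw [hP]
        simp only [List.mem_toFinset, List.mem_append, List.mem_cons]
        rintro (h | h | h)
        · exact hkδ₁ h
        · exact hjk' h.symm
        · exact hkδ₂ (by rw [hst]; simp [h])
      have hPsub : pre π y ⊆ pre π k := by
        rw [hP, hpreπk]
        intro z hz
        simp only [List.mem_toFinset, List.mem_append, List.mem_cons] at hz ⊢
        rcases hz with h | h | h
        · exact Or.inl h
        · exact Or.inr (Or.inl h)
        · refine Or.inr (Or.inr ?_)
          rw [hst]; simp [h]
      have hijP : insert j Pa ⊆ pre π y := by
        rw [hP]
        intro z hz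
        simp only [List.mem_toFinset, List.mem_append, List.mem_cons]
        rcases Finset.mem_insert.1 hz with rfl | hz'
        · exact Or.inr (Or.inl rfl)
        · exact Or.inl (by simpa using hPaD1 hz')
      have IKB : I {k} {y} (pre π y) := by
        refine L1 {y} (pre π y) ?_ ?_ hijP hPsub ?_ ⟨y, Finset.mem_singleton_self y⟩
        · intro z hz
          rw [Finset.mem_singleton] at hz
          subst hz
          exact hyPre
        · intro z hz
          rw [Finset.mem_singleton] at hz
          subst hz
          exact hynp
        · intro z hz
          rw [Finset.mem_singleton] at hz
          subst hz
          exact hyP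
      by_cases hxk : x = k
      · exfalso
        subst hxk
        rw [hins, Finset.erase_insert hkP] at hnI
        exact hnI IKB
      · have hxP : x ∈ pre π y := by
          rw [hins] at hx
          rcases Finset.mem_insert.1 hx with h | h
          · exact absurd h hxk
          · exact h
        by_cases hxyE : (x, y) ∈ RUedges I π
        · exact (hHmem x y).2 (Or.inl ⟨hxyE, fun h => hyk (congrArg Prod.snd h)⟩)
        · exfalso
          have hIxy : I {x} {y} ((pre π y).erase x) := by
            rw [mem_RUedges] at hxyE
            push_neg at hxyE
            exact hxyE hxP
          have hQx : (pre π y).erase x ∪ {x} = pre π y := by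
            rw [Finset.union_comm, ← Finset.insert_eq]
            exact Finset.insert_erase hxP
          have hyk2 : I {y} {k} ((pre π y).erase x ∪ {x}) := by
            rw [hQx]
            exact hG.symm _ _ _ IKB
          have hcontr := hG.contraction {y} {x} {k} ((pre π y).erase x)
            (hG.symm _ _ _ hIxy) hyk2
          have hwu := hG.weakUnion {y} {x} {k} ((pre π y).erase x) hcontr
          have hfin := hG.symm _ _ _ hwu
          have heq2 : (pre π y).erase x ∪ {k} = (pre τ y).erase x := by
            rw [hins, Finset.erase_insert_of_ne (Ne.symm hxk), Finset.union_comm,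
              ← Finset.insert_eq]
          rw [heq2] at hfin
          exact hnI hfin
    · -- y = k
      subst hyk'
      rw [hpreτk] at hx hnI
      by_cases hxPa : x ∈ Pa
      · exact (hHmem x y).2 (Or.inl ⟨(hpak x).2 (Or.inl hxPa),
          fun h => hjPa (by
            have hx' : x = j := congrArg Prod.fst h
            rw [← hx']
            exact hxPa)⟩)
      · exfalso
        have hder := (HJK x (Finset.mem_sdiff.2 ⟨hx, hxPa⟩)).2
        exact hnI hder
    · -- y ∈ δ₃
      rw [hsplitδ₃ y hy3] at hx hnI
      have hyk : y ≠ k := fun h => hkδ₃ (h ▸ hy3)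
      exact (hHmem x y).2 (Or.inl ⟨mem_RUedges.2 ⟨hx, hnI⟩,
        fun h => hyk (congrArg Prod.snd h)⟩)
  -- part (c)
  have hcard : (RUedges I τ).card ≤ (RUedges I π).card := by
    have h1 : (k, j) ∉ (RUedges I π).erase (j, k) :=
      fun h => hkjE (Finset.mem_of_mem_erase h)
    have h2 : H.card = (RUedges I π).card := by
      rw [hH, Finset.card_insert_of_notMem h1, Finset.card_erase_of_mem hjkE]
      have : 0 < (RUedges I π).card := Finset.card_pos.2 ⟨_, hjkE⟩
      omega
    calc (RUedges I τ).card ≤ H.card := Finset.card_le_card hFH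
      _ = (RUedges I π).card := h2
  -- part (d)
  refine ⟨hcausal, hFH, hcard, ?_⟩
  intro A B Cs hdisj hsep
  intro a ha bb hbb hconn
  have hab : a ≠ bb := by
    intro h
    exact Finset.disjoint_left.1 hdisj.1 ha (h ▸ hbb)
  have h1 := dconn_to_awstart no2F hconn
  have h2 : AWStart H Cs (colAn H Cs) a bb := by
    refine h1.mono (fun e heF => hFH heF) ?_
    rintro v ⟨d, hd, hr⟩
    exact ⟨d, hd, Relation.ReflTransGen.mono (fun x y hxy => hFH hxy) _ _ hr⟩
  have h3 := h2.anToSt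
  have h4 := mainStart hjkE hpaj hpak hjPa hkPa hjk' hHmem hab h3
  have h5 := awstart_to_dconn no2E h4
  exact hsep a ha bb hbb h5
end

section
/- Let P be a graphoid over V and π a permutation. Consider π¹ = ⟨δ₁, j, k, δ₂⟩ and τ¹ = ⟨ζ₁, j, k, ζ₂⟩ with j immediately before k in both, and let π² = ⟨δ₁, k, j, δ₂⟩ and τ² = ⟨ζ₁, k, j, ζ₂⟩ be the results of swapping j and k. If the induced DAGs satisfy G_{π¹} = G_{τ¹}, then G_{π²} = G_{τ²}. -/
open Classical
attribute [local instance] Classical.propDecidable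

variable {V : Type} [Fintype V] [DecidableEq V]

set_option linter.unusedSectionVars false

section Aux

lemma fpl_id1 {M : Finset V} {a : V} (haM : a ∈ M) : M.erase a ∪ {a} = M := by
  ext x
  simp only [Finset.mem_union, Finset.mem_erase, Finset.mem_singleton]
  constructor
  · rintro (⟨_, h⟩ | rfl) <;> [exact h; exact haM]
  · intro hx; by_cases hxa : x = a
    · exact Or.inr hxa
    · exact Or.inl ⟨hxa, hx⟩

lemma fpl_id2 {S M : Finset V} {a : V} (hMS : M ⊆ S) (haM : a ∈ M) :
    M.erase a ∪ (S \ M) = S.erase a := by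
  ext x
  simp only [Finset.mem_union, Finset.mem_erase, Finset.mem_sdiff]
  constructor
  · rintro (⟨hxa, hxM⟩ | ⟨hxS, hxM⟩)
    · exact ⟨hxa, hMS hxM⟩
    · exact ⟨fun h => hxM (h ▸ haM), hxS⟩
  · rintro ⟨hxa, hxS⟩
    by_cases hxM : x ∈ M
    · exact Or.inl ⟨hxa, hxM⟩
    · exact Or.inr ⟨hxS, hxM⟩

lemma fpl_id3 {S M : Finset V} {a : V} (haS : a ∈ S) (haM : a ∉ M) :
    {a} ∪ (S \ M).erase a = S \ M := by
  ext x
  simp only [Finset.mem_union, Finset.mem_erase, Finset.mem_sdiff, Finset.mem_singleton]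
  constructor
  · rintro (rfl | ⟨_, h⟩) <;> [exact ⟨haS, haM⟩; exact h]
  · intro hx; by_cases hxa : x = a
    · exact Or.inl hxa
    · exact Or.inr ⟨hxa, hx⟩

lemma fpl_id4 {S M : Finset V} {a : V} (hMS : M ⊆ S) (haM : a ∉ M) :
    M ∪ (S \ M).erase a = S.erase a := by
  ext x
  simp only [Finset.mem_union, Finset.mem_erase, Finset.mem_sdiff]
  constructor
  · rintro (hxM | ⟨hxa, hxS, _⟩)
    · exact ⟨fun h => haM (h ▸ hxM), hMS hxM⟩
    · exact ⟨hxa, hxS⟩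
  · rintro ⟨hxa, hxS⟩
    by_cases hxM : x ∈ M
    · exact Or.inl hxM
    · exact Or.inr ⟨hxa, hxS, hxM⟩

lemma fpl_id5 {S U : Finset V} {b : V} (hUS : U ⊆ S) (hb : b ∈ U) :
    S \ U ∪ {b} = S \ U.erase b := by
  ext x
  simp only [Finset.mem_union, Finset.mem_sdiff, Finset.mem_singleton, Finset.mem_erase]
  constructor
  · rintro (⟨hxS, hxU⟩ | rfl)
    · exact ⟨hxS, fun ⟨_, h⟩ => hxU h⟩
    · exact ⟨hUS hb, fun ⟨h, _⟩ => h rfl⟩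
  · rintro ⟨hxS, hx⟩
    by_cases hxb : x = b
    · exact Or.inr hxb
    · exact Or.inl ⟨hxS, fun h => hx ⟨hxb, h⟩⟩

lemma fpl_id6 {S U : Finset V} {b : V} (hUS : U ⊆ S) (hb : b ∈ U) :
    S \ U ∪ U.erase b = S.erase b := by
  ext x
  simp only [Finset.mem_union, Finset.mem_sdiff, Finset.mem_erase]
  constructor
  · rintro (⟨hxS, hxU⟩ | ⟨hxb, hxU⟩)
    · exact ⟨fun h => hxU (h ▸ hb), hxS⟩
    · exact ⟨hxb, hUS hxU⟩
  · rintro ⟨hxb, hxS⟩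
    by_cases hxU : x ∈ U
    · exact Or.inr ⟨hxb, hxU⟩
    · exact Or.inl ⟨hxS, hxU⟩

variable {I : IndepModel V}

lemma joint_indep (hG : Graphoid I) (v : V) (S : Finset V) :
    ∀ U : Finset V, U ⊆ S → U.Nonempty → (∀ a ∈ U, I {v} {a} (S.erase a)) →
      I {v} U (S \ U) := by
  intro U
  induction U using Finset.strongInduction with
  | _ U ih =>
    intro hUS hUne hpt
    obtain ⟨b, hb⟩ := hUne
    by_cases hU' : U.erase b = ∅
    · have hUb : U = {b} := by
        apply Finset.eq_singleton_iff_unique_mem.2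
        refine ⟨hb, fun x hx => ?_⟩
        by_contra hxb
        exact absurd (Finset.mem_erase.2 ⟨hxb, hx⟩) (by simp [hU'])
      subst hUb
      have := hpt b (by simp)
      rwa [Finset.erase_eq] at this
    · have hU'ne : (U.erase b).Nonempty := Finset.nonempty_of_ne_empty hU'
      have hsub : U.erase b ⊂ U := Finset.erase_ssubset hb
      have hIH : I {v} (U.erase b) (S \ U.erase b) :=
        ih _ hsub (fun x hx => hUS (Finset.mem_of_mem_erase hx)) hU'ne
          (fun a ha => hpt a (Finset.mem_of_mem_erase ha))
      have hbase : I {v} {b} (S.erase b) := hpt b hb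
      have := hG.intersection {v} (U.erase b) {b} (S \ U)
        (by rwa [fpl_id5 hUS hb]) (by rwa [fpl_id6 hUS hb])
      rwa [fpl_id1 hb] at this

lemma mb_transfer (hG : Graphoid I) (v : V) (S M : Finset V) (hMS : M ⊆ S)
    (hbl : M = S ∨ I {v} (S \ M) M) :
    ∀ a ∈ S, (I {v} {a} (S.erase a) ↔ (a ∉ M ∨ I {v} {a} (M.erase a))) := by
  intro a haS
  rcases hbl with rfl | hbl
  · simp [haS]
  by_cases haM : a ∈ M
  · simp only [haM, not_true, false_or]
    constructor
    · intro h1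
      have := hG.intersection {v} (S \ M) {a} (M.erase a)
        (by rwa [fpl_id1 haM]) (by rwa [fpl_id2 hMS haM])
      exact (hG.decomposition {v} (S \ M) {a} (M.erase a) this).2
    · intro h2
      have hcon := hG.contraction {v} {a} (S \ M) (M.erase a) h2 (by rwa [fpl_id1 haM])
      have := hG.weakUnion {v} {a} (S \ M) (M.erase a) hcon
      rwa [fpl_id2 hMS haM] at this
  · simp only [haM, not_false_iff, true_or, iff_true]
    have := hG.weakUnion {v} {a} ((S \ M).erase a) M (by rwa [fpl_id3 haS haM])
    rwa [fpl_id4 hMS haM] at this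

end Aux

section Core
variable {I : IndepModel V}

lemma fpl_id7 {s : Finset V} {a : V} : s ∪ {a} = insert a s := by
  ext x; simp [Finset.mem_insert, or_comm]

lemma transfer_iff (hG : Graphoid I) (v : V) (S M : Finset V) (hMS : M ⊆ S)
    (hbl : M = S ∨ I {v} (S \ M) M) :
    ∀ a, ((a ∈ S ∧ ¬ I {a} {v} (S.erase a)) ↔ (a ∈ M ∧ ¬ I {a} {v} (M.erase a))) := by
  intro a
  by_cases haS : a ∈ S
  · have h := mb_transfer hG v S M hMS hbl a haS
    constructor
    · rintro ⟨-, hna⟩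
      have h3 : ¬ (a ∉ M ∨ I {v} {a} (M.erase a)) :=
        fun hh => hna (hG.symm _ _ _ (h.2 hh))
      rw [not_or, not_not] at h3
      exact ⟨h3.1, fun h' => h3.2 (hG.symm _ _ _ h')⟩
    · rintro ⟨haM, hna⟩
      refine ⟨haS, fun h' => ?_⟩
      rcases h.1 (hG.symm _ _ _ h') with h4 | h4
      · exact h4 haM
      · exact hna (hG.symm _ _ _ h4)
  · constructor
    · rintro ⟨h, -⟩; exact absurd h haS
    · rintro ⟨h, -⟩; exact absurd (hMS h) haS

lemma core (hG : Graphoid I) {j k : V} {S : Finset V}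
    (hjS : j ∉ S) (hkS : k ∉ S) (hjk : j ≠ k)
    (pk pj : Finset V)
    (hpk : ∀ a, a ∈ pk ↔ a ∈ insert j S ∧ ¬ I {a} {k} ((insert j S).erase a))
    (hpj : ∀ a, a ∈ pj ↔ a ∈ S ∧ ¬ I {a} {j} (S.erase a)) :
    ∀ a : V,
      ((a ∈ S ∧ ¬ I {a} {k} (S.erase a)) ↔
        (a ∈ pk.erase j ∪ pj ∧ ¬ I {a} {k} ((pk.erase j ∪ pj).erase a))) ∧
      ((a ∈ insert k S ∧ ¬ I {a} {j} ((insert k S).erase a)) ↔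
        (a ∈ (if j ∈ pk then insert k (pk.erase j ∪ pj) else pk.erase j ∪ pj) ∧
          ¬ I {a} {j} ((if j ∈ pk then insert k (pk.erase j ∪ pj) else pk.erase j ∪ pj).erase a))) := by
  set M := pk.erase j ∪ pj with hMdef
  have hpkS : pk ⊆ insert j S := fun a ha => ((hpk a).1 ha).1
  have hpjS : pj ⊆ S := fun a ha => ((hpj a).1 ha).1
  have hMS : M ⊆ S := by
    intro x hx
    rcases Finset.mem_union.1 hx with hx | hx
    · rcases Finset.mem_erase.1 hx with ⟨hxj, hxpk⟩
      rcases Finset.mem_insert.1 (hpkS hxpk) with h | h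
      · exact absurd h hxj
      · exact h
    · exact hpjS hx
  have hkM : k ∉ M := fun h => hkS (hMS h)
  have hRS : S \ M ⊆ S := Finset.sdiff_subset
  have hRQ : ∀ x ∈ S \ M, x ∉ pj :=
    fun x hx hq => (Finset.mem_sdiff.1 hx).2 (Finset.mem_union_right _ hq)
  have hRpk : ∀ x ∈ S \ M, x ∉ pk := by
    intro x hx hp
    have hxS : x ∈ S := (Finset.mem_sdiff.1 hx).1
    have hxj : x ≠ j := fun h => hjS (h ▸ hxS)
    exact (Finset.mem_sdiff.1 hx).2
      (Finset.mem_union_left _ (Finset.mem_erase.2 ⟨hxj, hp⟩))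
  have hRsubQ : S \ M ⊆ S \ pj :=
    fun x hx => Finset.mem_sdiff.2 ⟨(Finset.mem_sdiff.1 hx).1, hRQ x hx⟩
  have hidQ : pj ∪ ((S \ pj) \ (S \ M)) = M := by
    ext x
    simp only [Finset.mem_union, Finset.mem_sdiff]
    constructor
    · rintro (hx | ⟨⟨hxS, _⟩, hxR⟩)
      · exact Finset.mem_union_right _ hx
      · by_contra hxM
        exact hxR ⟨hxS, hxM⟩
    · intro hxM
      by_cases hxpj : x ∈ pj
      · exact Or.inl hxpj
      · exact Or.inr ⟨⟨hMS hxM, hxpj⟩, fun h => h.2 hxM⟩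
  have hLMj : (S \ M).Nonempty → I {j} (S \ pj) pj := by
    intro hRne
    have := joint_indep hG j S (S \ pj) Finset.sdiff_subset (hRne.mono hRsubQ)
      (fun a ha => by
        have haS : a ∈ S := (Finset.mem_sdiff.1 ha).1
        have hapj : a ∉ pj := (Finset.mem_sdiff.1 ha).2
        have : I {a} {j} (S.erase a) := by
          by_contra hcon
          exact hapj ((hpj a).2 ⟨haS, hcon⟩)
        exact hG.symm _ _ _ this)
    rwa [Finset.sdiff_sdiff_eq_self hpjS] at this
  have hst1 : (S \ M).Nonempty → I {j} (S \ M) M := by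
    intro hRne
    have h0 : (S \ M) ∪ ((S \ pj) \ (S \ M)) = S \ pj :=
      Finset.union_sdiff_of_subset hRsubQ
    have := hG.weakUnion {j} (S \ M) ((S \ pj) \ (S \ M)) pj
      (by rw [h0]; exact hLMj hRne)
    rwa [hidQ] at this
  -- local Markov for k
  have hRsubP : S \ M ⊆ (insert j S) \ pk := fun x hx =>
    Finset.mem_sdiff.2 ⟨Finset.mem_insert_of_mem (Finset.mem_sdiff.1 hx).1, hRpk x hx⟩
  have hidP : pk ∪ (((insert j S) \ pk) \ (S \ M)) = insert j M := by
    ext x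
    simp only [Finset.mem_union, Finset.mem_sdiff, Finset.mem_insert]
    constructor
    · rintro (hx | ⟨⟨hxS', hxpk⟩, hxR⟩)
      · by_cases hxj : x = j
        · exact Or.inl hxj
        · exact Or.inr (Finset.mem_union_left _ (Finset.mem_erase.2 ⟨hxj, hx⟩))
      · rcases hxS' with rfl | hxS
        · exact Or.inl rfl
        · refine Or.inr ?_
          by_contra hxM
          exact hxR ⟨hxS, hxM⟩
    · rintro (rfl | hxM)
      · by_cases hxpk : x ∈ pk
        · exact Or.inl hxpk
        · exact Or.inr ⟨⟨Or.inl rfl, hxpk⟩, fun h => hjS h.1⟩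
      · by_cases hxpk : x ∈ pk
        · exact Or.inl hxpk
        · exact Or.inr ⟨⟨Or.inr (hMS hxM), hxpk⟩,
            fun h => h.2 hxM⟩
  have hLMk : (S \ M).Nonempty → I {k} ((insert j S) \ pk) pk := by
    intro hRne
    have := joint_indep hG k (insert j S) ((insert j S) \ pk) Finset.sdiff_subset
      (hRne.mono hRsubP)
      (fun a ha => by
        have haS : a ∈ insert j S := (Finset.mem_sdiff.1 ha).1
        have hapk : a ∉ pk := (Finset.mem_sdiff.1 ha).2
        have : I {a} {k} ((insert j S).erase a) := by
          by_contra hcon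
          exact hapk ((hpk a).2 ⟨haS, hcon⟩)
        exact hG.symm _ _ _ this)
    rwa [Finset.sdiff_sdiff_eq_self hpkS] at this
  have hst2 : (S \ M).Nonempty → I {k} (S \ M) (insert j M) := by
    intro hRne
    have h0 : (S \ M) ∪ (((insert j S) \ pk) \ (S \ M)) = (insert j S) \ pk :=
      Finset.union_sdiff_of_subset hRsubP
    have := hG.weakUnion {k} (S \ M) (((insert j S) \ pk) \ (S \ M)) pk
      (by rw [h0]; exact hLMk hRne)
    rwa [hidP] at this
  have hst3 : (S \ M).Nonempty → I (S \ M) ({j} ∪ {k}) M := by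
    intro hRne
    refine hG.contraction (S \ M) {j} {k} M (hG.symm _ _ _ (hst1 hRne)) ?_
    have := hG.symm _ _ _ (hst2 hRne)
    rwa [fpl_id7]
  have hblk : M = S ∨ I {k} (S \ M) M := by
    by_cases hR : S \ M = ∅
    · exact Or.inl (Finset.Subset.antisymm hMS (fun x hx => by
        by_contra hxM
        exact absurd (Finset.mem_sdiff.2 ⟨hx, hxM⟩) (by simp [hR])))
    · exact Or.inr (hG.symm _ _ _
        ((hG.decomposition (S \ M) {j} {k} M (hst3 (Finset.nonempty_of_ne_empty hR))).2))
  have hfirst := transfer_iff hG k S M hMS hblk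
  by_cases hedge : j ∈ pk
  · -- edge case : new parent set of j is insert k M
    have hins : (insert k S) \ (insert k M) = S \ M := by
      ext x
      simp only [Finset.mem_sdiff, Finset.mem_insert, not_or]
      constructor
      · rintro ⟨rfl | hxS, hxk, hxM⟩
        · exact absurd rfl hxk
        · exact ⟨hxS, hxM⟩
      · rintro ⟨hxS, hxM⟩
        exact ⟨Or.inr hxS, fun h => hkS (h ▸ hxS), hxM⟩
    have hblj : insert k M = insert k S ∨
        I {j} ((insert k S) \ insert k M) (insert k M) := by
      by_cases hR : S \ M = ∅
      · have : M = S := Finset.Subset.antisymm hMS (fun x hx => by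
          by_contra hxM
          exact absurd (Finset.mem_sdiff.2 ⟨hx, hxM⟩) (by simp [hR]))
        exact Or.inl (by rw [this])
      · right
        rw [hins]
        have hRne := Finset.nonempty_of_ne_empty hR
        have := hG.weakUnion (S \ M) {j} {k} M (hst3 hRne)
        rw [fpl_id7] at this
        exact hG.symm _ _ _ this
    have hsecond := transfer_iff hG j (insert k S) (insert k M)
      (Finset.insert_subset_insert _ hMS) hblj
    intro a
    rw [if_pos hedge]
    exact ⟨hfirst a, hsecond a⟩
  · -- no edge : I {j} {k} S
    have hnoedge : I {j} {k} S := by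
      have hjmem : j ∈ insert j S := Finset.mem_insert_self _ _
      have : I {j} {k} ((insert j S).erase j) := by
        by_contra hcon
        exact hedge ((hpk j).2 ⟨hjmem, hcon⟩)
      rwa [Finset.erase_insert hjS] at this
    have hinsM : (insert k S) \ M = insert k (S \ M) := by
      ext x
      simp only [Finset.mem_sdiff, Finset.mem_insert]
      constructor
      · rintro ⟨rfl | hxS, hxM⟩
        · exact Or.inl rfl
        · exact Or.inr ⟨hxS, hxM⟩
      · rintro (rfl | ⟨hxS, hxM⟩)
        · exact ⟨Or.inl rfl, hkM⟩
        · exact ⟨Or.inr hxS, hxM⟩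
    have hblj : M = insert k S ∨ I {j} ((insert k S) \ M) M := by
      right
      rw [hinsM]
      by_cases hR : S \ M = ∅
      · have hMS' : M = S := Finset.Subset.antisymm hMS (fun x hx => by
          by_contra hxM
          exact absurd (Finset.mem_sdiff.2 ⟨hx, hxM⟩) (by simp [hR]))
        rw [hR, hMS']; have hkk : insert k (∅ : Finset V) = {k} := by ext x; simp
        rw [hkk]
        exact hnoedge
      · have hRne := Finset.nonempty_of_ne_empty hR
        have hcontr : I {j} ((S \ pj) ∪ {k}) pj := by
          refine hG.contraction {j} (S \ pj) {k} pj (hLMj hRne) ?_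
          rwa [Finset.union_sdiff_of_subset hpjS]
        have hidB : insert k (S \ M) ∪ ((S \ pj) \ (S \ M)) = (S \ pj) ∪ {k} := by
          ext x
          simp only [Finset.mem_union, Finset.mem_insert, Finset.mem_sdiff,
            Finset.mem_singleton]
          constructor
          · rintro ((rfl | ⟨hxS, hxM⟩) | ⟨⟨hxS, hxpj⟩, _⟩)
            · exact Or.inr rfl
            · exact Or.inl ⟨hxS, hRQ x (Finset.mem_sdiff.2 ⟨hxS, hxM⟩)⟩
            · exact Or.inl ⟨hxS, hxpj⟩
          · rintro (⟨hxS, hxpj⟩ | rfl)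
            · by_cases hxM : x ∈ M
              · exact Or.inr ⟨⟨hxS, hxpj⟩, fun h => h.2 hxM⟩
              · exact Or.inl (Or.inr ⟨hxS, hxM⟩)
            · exact Or.inl (Or.inl rfl)
        have := hG.weakUnion {j} (insert k (S \ M)) ((S \ pj) \ (S \ M)) pj
          (by rw [hidB]; exact hcontr)
        rwa [hidQ] at this
    have hsecond := transfer_iff hG j (insert k S) M
      (fun x hx => Finset.mem_insert_of_mem (hMS hx)) hblj
    intro a
    rw [if_neg hedge]
    exact ⟨hfirst a, hsecond a⟩

end Core

lemma pre_cons_self (l₁ l₂ : List V) (v : V) (hv : v ∉ l₁) :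
    pre (l₁ ++ v :: l₂) v = l₁.toFinset := by
  induction l₁ with
  | nil => simp [pre, List.takeWhile]
  | cons c l ih =>
    have hcv : (c != v) = true := by
      simp only [bne_iff_ne, ne_eq]
      exact fun h => hv (by simp [h])
    have hvl : v ∉ l := fun h => hv (by simp [h])
    simp only [List.cons_append, pre, List.takeWhile_cons, hcv, if_true,
      List.toFinset_cons]
    rw [show ((l ++ v :: l₂).takeWhile (fun x => x != v)).toFinset =
      pre (l ++ v :: l₂) v from rfl, ih hvl]

lemma pre_swap (l₁ l₂ : List V) (x y v : V) (hx : v ≠ x) (hy : v ≠ y) :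
    pre (l₁ ++ x :: y :: l₂) v = pre (l₁ ++ y :: x :: l₂) v := by
  induction l₁ with
  | nil =>
    have hxv : (x != v) = true := by simp [bne_iff_ne]; exact fun h => hx h.symm
    have hyv : (y != v) = true := by simp [bne_iff_ne]; exact fun h => hy h.symm
    simp only [List.nil_append, pre, List.takeWhile_cons, hxv, hyv, if_true,
      List.toFinset_cons]
    exact Finset.insert_comm x y _
  | cons c l ih =>
    by_cases hcv : c = v
    · subst hcv
      simp [pre, List.takeWhile_cons]
    · have hcv' : (c != v) = true := by simp [bne_iff_ne, hcv]
      simp only [List.cons_append, pre, List.takeWhile_cons, hcv', if_true,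
        List.toFinset_cons]
      rw [show ∀ r : List V, ((r).takeWhile (fun a => a != v)).toFinset = pre r v
        from fun _ => rfl, show ((l ++ y :: x :: l₂).takeWhile
        (fun a => a != v)).toFinset = pre (l ++ y :: x :: l₂) v from rfl, ih]


/-- if two permutations with `j` immediately before `k` induce the same
DAG, then the permutations obtained by swapping `j` and `k` also induce the same DAG. -/
theorem four_perm_lemma (I : IndepModel V) (hG : Graphoid I)
    (j k : V) (δ₁ δ₂ ζ₁ ζ₂ : List V) (π₁ τ₁ π₂ τ₂ : List V)
    (hπ₁ : π₁ = δ₁ ++ j :: k :: δ₂) (hτ₁ : τ₁ = ζ₁ ++ j :: k :: ζ₂)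
    (hπ₂ : π₂ = δ₁ ++ k :: j :: δ₂) (hτ₂ : τ₂ = ζ₁ ++ k :: j :: ζ₂)
    (hp₁ : IsPermList π₁) (hp₂ : IsPermList τ₁)
    (heq : RUedges I π₁ = RUedges I τ₁) :
    RUedges I π₂ = RUedges I τ₂ := by
  subst hπ₁ hτ₁ hπ₂ hτ₂
  obtain ⟨hnd₁, -⟩ := hp₁
  obtain ⟨hnd₂, -⟩ := hp₂
  have hjδ : j ∉ δ₁ := fun h => List.disjoint_of_nodup_append hnd₁ h (by simp)
  have hkδ : k ∉ δ₁ := fun h => List.disjoint_of_nodup_append hnd₁ h (by simp)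
  have hjζ : j ∉ ζ₁ := fun h => List.disjoint_of_nodup_append hnd₂ h (by simp)
  have hkζ : k ∉ ζ₁ := fun h => List.disjoint_of_nodup_append hnd₂ h (by simp)
  have hjk : j ≠ k := by
    have := (List.nodup_cons.1 (hnd₁.of_append_right)).1
    exact fun h => this (by simp [h])
  set D := δ₁.toFinset with hD
  set E := ζ₁.toFinset with hE
  have hjD : j ∉ D := by simp [hD, List.mem_toFinset, hjδ]
  have hkD : k ∉ D := by simp [hD, List.mem_toFinset, hkδ]
  have hjE : j ∉ E := by simp [hE, List.mem_toFinset, hjζ]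
  have hkE : k ∉ E := by simp [hE, List.mem_toFinset, hkζ]
  -- pre computations
  have hpre_kD : pre (δ₁ ++ k :: j :: δ₂) k = D := pre_cons_self δ₁ (j :: δ₂) k hkδ
  have hpre_kE : pre (ζ₁ ++ k :: j :: ζ₂) k = E := pre_cons_self ζ₁ (j :: ζ₂) k hkζ
  have hpre_jD1 : pre (δ₁ ++ j :: k :: δ₂) j = D := pre_cons_self δ₁ (k :: δ₂) j hjδ
  have hpre_jE1 : pre (ζ₁ ++ j :: k :: ζ₂) j = E := pre_cons_self ζ₁ (k :: ζ₂) j hjζ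
  have happ : ∀ (l₁ l₂ : List V) (x y : V), l₁ ++ x :: y :: l₂ = (l₁ ++ [x]) ++ y :: l₂ := by
    intro l₁ l₂ x y; simp
  have htoF : ∀ (l : List V) (x : V), (l ++ [x]).toFinset = insert x l.toFinset := by
    intro l x
    rw [List.toFinset_append]
    simp [fpl_id7]
  have hpre_jD2 : pre (δ₁ ++ k :: j :: δ₂) j = insert k D := by
    rw [happ, pre_cons_self _ _ _ (by
      simp only [List.mem_append, List.mem_singleton, not_or]
      exact ⟨hjδ, hjk⟩), htoF]
  have hpre_jE2 : pre (ζ₁ ++ k :: j :: ζ₂) j = insert k E := by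
    rw [happ, pre_cons_self _ _ _ (by
      simp only [List.mem_append, List.mem_singleton, not_or]
      exact ⟨hjζ, hjk⟩), htoF]
  have hpre_kD1 : pre (δ₁ ++ j :: k :: δ₂) k = insert j D := by
    rw [happ, pre_cons_self _ _ _ (by
      simp only [List.mem_append, List.mem_singleton, not_or]
      exact ⟨hkδ, fun h => hjk h.symm⟩), htoF]
  have hpre_kE1 : pre (ζ₁ ++ j :: k :: ζ₂) k = insert j E := by
    rw [happ, pre_cons_self _ _ _ (by
      simp only [List.mem_append, List.mem_singleton, not_or]
      exact ⟨hkζ, fun h => hjk h.symm⟩), htoF]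
  -- parent sets of k and j in the common DAG
  set pkD := (insert j D).filter (fun a => ¬ I {a} {k} ((insert j D).erase a)) with hpkDdef
  set pjD := D.filter (fun a => ¬ I {a} {j} (D.erase a)) with hpjDdef
  have hpkD : ∀ a, a ∈ pkD ↔ a ∈ insert j D ∧ ¬ I {a} {k} ((insert j D).erase a) := by
    intro a; simp [hpkDdef, Finset.mem_filter]
  have hpjD : ∀ a, a ∈ pjD ↔ a ∈ D ∧ ¬ I {a} {j} (D.erase a) := by
    intro a; simp [hpjDdef, Finset.mem_filter]
  have hmemheq : ∀ a v, ((a, v) ∈ RUedges I (δ₁ ++ j :: k :: δ₂)) ↔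
      ((a, v) ∈ RUedges I (ζ₁ ++ j :: k :: ζ₂)) := by
    intro a v; rw [heq]
  have hpkE : ∀ a, a ∈ pkD ↔ a ∈ insert j E ∧ ¬ I {a} {k} ((insert j E).erase a) := by
    intro a
    rw [hpkD a]
    have h1 : ((a, k) ∈ RUedges I (δ₁ ++ j :: k :: δ₂)) ↔
        (a ∈ insert j D ∧ ¬ I {a} {k} ((insert j D).erase a)) := by
      simp only [RUedges, Finset.mem_filter, Finset.mem_univ, true_and, hpre_kD1]
    have h2 : ((a, k) ∈ RUedges I (ζ₁ ++ j :: k :: ζ₂)) ↔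
        (a ∈ insert j E ∧ ¬ I {a} {k} ((insert j E).erase a)) := by
      simp only [RUedges, Finset.mem_filter, Finset.mem_univ, true_and, hpre_kE1]
    rw [← h1, hmemheq, h2]
  have hpjE : ∀ a, a ∈ pjD ↔ a ∈ E ∧ ¬ I {a} {j} (E.erase a) := by
    intro a
    rw [hpjD a]
    have h1 : ((a, j) ∈ RUedges I (δ₁ ++ j :: k :: δ₂)) ↔
        (a ∈ D ∧ ¬ I {a} {j} (D.erase a)) := by
      simp only [RUedges, Finset.mem_filter, Finset.mem_univ, true_and, hpre_jD1]
    have h2 : ((a, j) ∈ RUedges I (ζ₁ ++ j :: k :: ζ₂)) ↔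
        (a ∈ E ∧ ¬ I {a} {j} (E.erase a)) := by
      simp only [RUedges, Finset.mem_filter, Finset.mem_univ, true_and, hpre_jE1]
    rw [← h1, hmemheq, h2]
  have hcoreD := core hG hjD hkD hjk pkD pjD hpkD hpjD
  have hcoreE := core hG hjE hkE hjk pkD pjD hpkE hpjE
  apply Finset.ext
  rintro ⟨a, v⟩
  simp only [RUedges, Finset.mem_filter, Finset.mem_univ, true_and]
  by_cases hvk : v = k
  · subst hvk
    rw [hpre_kD, hpre_kE]
    exact ((hcoreD a).1).trans ((hcoreE a).1).symm
  · by_cases hvj : v = j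
    · subst hvj
      rw [hpre_jD2, hpre_jE2]
      exact ((hcoreD a).2).trans ((hcoreE a).2).symm
    · rw [pre_swap δ₁ δ₂ k j v hvk hvj, pre_swap ζ₁ ζ₂ k j v hvk hvj]
      have h := hmemheq a v
      simpa only [RUedges, Finset.mem_filter, Finset.mem_univ, true_and] using h
end

section
/- Let P be a graphoid over V and let W = ⟨π¹, ..., π^m⟩ be a DAG-changing walk in the permutohedron relative to (j, k) — i.e., consecutive permutations differ by an adjacent transposition, G_{π¹} = ... = G_{π^{m-1}}, G_{π^{m-1}} ≠ G_{π^m}, and π^m is obtained from π^{m-1} by swapping adjacent entries j, k. Then j → k is a singular edge in G_{π¹}, i.e., there is no directed path from j to k in G_{π¹} other than the edge j → k itself. -/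
open Classical
attribute [local instance] Classical.propDecidable

variable {V : Type} [Fintype V] [DecidableEq V]

lemma takeWhile_ne_append {l1 l2 : List V} {b : V} (h : b ∉ l1) :
    (l1 ++ b :: l2).takeWhile (fun x => x != b) = l1 := by
  induction l1 with
  | nil => simp
  | cons a t ih =>
    simp only [List.mem_cons, not_or] at h
    rw [List.cons_append, List.takeWhile_cons_of_pos (by simp [Ne.symm h.1]), ih h.2]

lemma pre_append {l1 l2 : List V} {b : V} (h : b ∉ l1) :
    pre (l1 ++ b :: l2) b = l1.toFinset := by
  rw [pre, takeWhile_ne_append h]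

lemma indexOf_lt_of_mem_takeWhile {a b : V} :
    ∀ {l : List V}, a ∈ l.takeWhile (fun x => x != b) → l.idxOf a < l.idxOf b := by
  intro l
  induction l with
  | nil => simp
  | cons h t ih =>
    intro hm
    by_cases hhb : h = b
    · rw [List.takeWhile_cons_of_neg (by simp [hhb])] at hm
      simp at hm
    · rw [List.takeWhile_cons_of_pos (by simp [hhb])] at hm
      rw [List.idxOf_cons_ne t hhb]
      rcases List.mem_cons.mp hm with rfl | hm
      · rw [List.idxOf_cons_self]; omega
      · by_cases hah : a = h
        · subst hah; rw [List.idxOf_cons_self]; omega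
        · rw [List.idxOf_cons_ne t (Ne.symm hah)]
          have := ih hm; omega

lemma RU_edge_indexOf_lt {I : IndepModel V} {π : List V} {a b : V}
    (h : (a, b) ∈ RUedges I π) : π.idxOf a < π.idxOf b := by
  rw [RUedges, Finset.mem_filter] at h
  exact indexOf_lt_of_mem_takeWhile (List.mem_toFinset.mp h.2.1)

lemma RU_trans_indexOf_lt {I : IndepModel V} {π : List V} {a b : V}
    (h : Relation.TransGen (Adj (RUedges I π)) a b) : π.idxOf a < π.idxOf b := by
  induction h with
  | single h => exact RU_edge_indexOf_lt h
  | tail _ h ih => exact lt_trans ih (RU_edge_indexOf_lt h)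

lemma union_singleton_eq_insert (x : V) (C : Finset V) : C ∪ {x} = insert x C := by
  rw [Finset.union_comm]; rfl

lemma swapIff {I : IndepModel V} (hG : Graphoid I) {a j k : V} {C : Finset V}
    (h : I {j} {k} (insert a C)) : (I {a} {k} (insert j C) ↔ I {a} {k} C) := by
  rw [← union_singleton_eq_insert] at h
  constructor
  · intro h1
    rw [← union_singleton_eq_insert] at h1
    have h1' := hG.symm _ _ _ h1
    have h' := hG.symm _ _ _ h
    have h2 := hG.intersection {k} {a} {j} C h1' h'
    exact hG.symm _ _ _ (hG.decomposition {k} {a} {j} C h2).1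
  · intro h1
    have h1' := hG.symm _ _ _ h1
    have h' := hG.symm _ _ _ h
    have h2 := hG.contraction {k} {a} {j} C h1' h'
    have h3 := hG.weakUnion {k} {a} {j} C h2
    rw [union_singleton_eq_insert] at h3
    exact hG.symm _ _ _ h3


/-- if a walk in the permutohedron is DAG-preserving up to its last
step, which swaps adjacent entries `j, k` and changes the DAG, then `j → k` is a
singular edge of the DAG induced by the initial permutation. -/
theorem dag_changing_walk_singular (I : IndepModel V) (hG : Graphoid I)
    (n : ℕ) (hn : 1 ≤ n) (ws : ℕ → List V) (j k : V)
    (hperm : IsPermList (ws 0))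
    (hadj : ∀ i < n, AdjTrans (ws i) (ws (i + 1)))
    (heq : ∀ i < n, RUedges I (ws i) = RUedges I (ws 0))
    (hneq : RUedges I (ws n) ≠ RUedges I (ws (n - 1)))
    (hlast : ∃ δ₁ δ₂ : List V,
      ws (n - 1) = δ₁ ++ j :: k :: δ₂ ∧ ws n = δ₁ ++ k :: j :: δ₂) :
    SingularEdge (RUedges I (ws 0)) j k := by
  obtain ⟨δ₁, δ₂, hπ, hτ⟩ := hlast
  have hG1 : RUedges I (ws (n - 1)) = RUedges I (ws 0) := heq _ (by omega)
  -- permutation property propagates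
  have hP : ∀ i, i ≤ n → IsPermList (ws i) := by
    intro i
    induction i with
    | zero => intro _; exact hperm
    | succ m ih =>
      intro h
      obtain ⟨a1, a2, x, y, h1, h2⟩ := hadj m (by omega)
      have hm := ih (by omega)
      have hpm : (ws m).Perm (ws (m + 1)) := by
        rw [h1, h2]; exact ((List.Perm.swap y x a2).append_left a1)
      exact ⟨hpm.nodup hm.1, fun v => hpm.mem_iff.mp (hm.2 v)⟩
  have hPn1 := hP (n - 1) (by omega)
  have hnd : (δ₁ ++ j :: k :: δ₂).Nodup := by rw [← hπ]; exact hPn1.1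
  rw [List.nodup_append] at hnd
  obtain ⟨hndδ₁, hnd2, hdisj⟩ := hnd
  have hjδ : j ∉ δ₁ := fun h => hdisj _ h _ (by simp) rfl
  have hkδ : k ∉ δ₁ := fun h => hdisj _ h _ (by simp) rfl
  have hjk : j ≠ k := by
    intro h; rw [List.nodup_cons] at hnd2; exact hnd2.1 (by simp [h])
  have hkδ₂ : k ∉ δ₂ := by
    rw [List.nodup_cons, List.nodup_cons] at hnd2
    exact hnd2.2.1
  have hjδ₂ : j ∉ δ₂ := by
    rw [List.nodup_cons] at hnd2
    intro h; exact hnd2.1 (by simp [h])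
  have hndδ₂ : δ₂.Nodup := by
    rw [List.nodup_cons, List.nodup_cons] at hnd2; exact hnd2.2.2
  set S : Finset V := δ₁.toFinset with hS
  -- pre computations
  have hprej : pre (ws (n - 1)) j = S := by rw [hπ]; exact pre_append hjδ
  have hprek : pre (ws (n - 1)) k = insert j S := by
    rw [hπ, show δ₁ ++ j :: k :: δ₂ = (δ₁ ++ [j]) ++ k :: δ₂ by simp,
      pre_append (by simp [hkδ, Ne.symm hjk])]
    simp [hS, union_singleton_eq_insert]
  have hpreτk : pre (ws n) k = S := by rw [hτ]; exact pre_append hkδ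
  have hpreτj : pre (ws n) j = insert k S := by
    rw [hτ, show δ₁ ++ k :: j :: δ₂ = (δ₁ ++ [k]) ++ j :: δ₂ by simp,
      pre_append (by simp [hjδ, hjk])]
    simp [hS, union_singleton_eq_insert]
  have hjS : j ∉ S := by simp [hS, hjδ]
  have hkS : k ∉ S := by simp [hS, hkδ]
  -- the edge j → k is present
  have hedge : (j, k) ∈ RUedges I (ws (n - 1)) := by
    by_contra hc
    simp only [RUedges, Finset.mem_filter, Finset.mem_univ, true_and, not_and, not_not] at hc
    have hI : I {j} {k} S := by
      have := hc (by rw [hprek]; exact Finset.mem_insert_self _ _)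
      rwa [hprek, Finset.erase_insert hjS] at this
    apply hneq
    ext ⟨a, b⟩
    simp only [RUedges, Finset.mem_filter, Finset.mem_univ, true_and]
    by_cases hbk : b = k
    · rw [hbk, hpreτk, hprek]
      by_cases haj : a = j
      · rw [haj]
        simp [hjS, Finset.erase_insert hjS, hI]
      · constructor
        · rintro ⟨haS, hna⟩
          refine ⟨Finset.mem_insert_of_mem haS, ?_⟩
          rw [Finset.erase_insert_of_ne (Ne.symm haj)]
          have hCa : insert a (S.erase a) = S := Finset.insert_erase haS
          rw [(swapIff hG (by rwa [hCa]))]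
          exact hna
        · rintro ⟨haS', hna⟩
          have haS : a ∈ S := by
            rcases Finset.mem_insert.mp haS' with h | h
            · exact absurd h haj
            · exact h
          refine ⟨haS, ?_⟩
          rw [Finset.erase_insert_of_ne (Ne.symm haj)] at hna
          have hCa : insert a (S.erase a) = S := Finset.insert_erase haS
          rw [← (swapIff hG (by rwa [hCa]))]
          exact hna
    · by_cases hbj : b = j
      · have hI' : I {k} {j} S := hG.symm _ _ _ hI
        rw [hbj, hpreτj, hprej]
        by_cases hak : a = k
        · rw [hak]
          simp [hkS, Finset.erase_insert hkS, hI']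
        · constructor
          · rintro ⟨haS', hna⟩
            have haS : a ∈ S := by
              rcases Finset.mem_insert.mp haS' with h | h
              · exact absurd h hak
              · exact h
            refine ⟨haS, ?_⟩
            rw [Finset.erase_insert_of_ne (Ne.symm hak)] at hna
            have hCa : insert a (S.erase a) = S := Finset.insert_erase haS
            rw [← (swapIff hG (by rwa [hCa]))]
            exact hna
          · rintro ⟨haS, hna⟩
            refine ⟨Finset.mem_insert_of_mem haS, ?_⟩
            rw [Finset.erase_insert_of_ne (Ne.symm hak)]
            have hCa : insert a (S.erase a) = S := Finset.insert_erase haS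
            rw [(swapIff hG (by rwa [hCa]))]
            exact hna
      · -- b ∉ {j, k}: pre unchanged
        have hpre : pre (ws n) b = pre (ws (n - 1)) b := by
          have hbmem : b ∈ δ₁ ++ j :: k :: δ₂ := by rw [← hπ]; exact hPn1.2 b
          simp only [List.mem_append, List.mem_cons] at hbmem
          rcases hbmem with hb1 | hb1 | hb1 | hb2
          · obtain ⟨s, t, rfl⟩ := List.append_of_mem hb1
            have hbs : b ∉ s := by
              rw [List.nodup_append] at hndδ₁
              rcases hndδ₁ with ⟨_, hb, hd⟩
              intro hmem; exact hd _ hmem _ (by simp) rfl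
            rw [hπ, hτ, show (s ++ b :: t) ++ j :: k :: δ₂ = s ++ b :: (t ++ j :: k :: δ₂) by simp,
              show (s ++ b :: t) ++ k :: j :: δ₂ = s ++ b :: (t ++ k :: j :: δ₂) by simp,
              pre_append hbs, pre_append hbs]
          · exact absurd hb1.symm (fun h => hbj h.symm)
          · exact absurd hb1.symm (fun h => hbk h.symm)
          · obtain ⟨s, t, rfl⟩ := List.append_of_mem hb2
            have hbδ₁ : b ∉ δ₁ := fun h => hdisj _ h _ (by simp) rfl
            have hbs : b ∉ s := by
              rw [List.nodup_append] at hndδ₂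
              rcases hndδ₂ with ⟨_, _, hd⟩
              intro hmem; exact hd _ hmem _ (by simp) rfl
            have hnj : b ≠ j := fun h => hbj h
            have hnk : b ≠ k := fun h => hbk h
            have h1 : b ∉ δ₁ ++ j :: k :: s := by simp [hbδ₁, hbs, hnj, hnk]
            have h2 : b ∉ δ₁ ++ k :: j :: s := by simp [hbδ₁, hbs, hnj, hnk]
            rw [hπ, hτ, show δ₁ ++ j :: k :: (s ++ b :: t) = (δ₁ ++ j :: k :: s) ++ b :: t by simp,
              show δ₁ ++ k :: j :: (s ++ b :: t) = (δ₁ ++ k :: j :: s) ++ b :: t by simp,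
              pre_append h1, pre_append h2]
            simp [List.toFinset_append, Finset.insert_comm]
        rw [hpre]
  -- singularity
  refine ⟨by rwa [hG1] at hedge, ?_⟩
  intro i hji hik
  exfalso
  rw [← hG1] at hji hik
  have h1 := RU_trans_indexOf_lt hji
  have h2 := RU_trans_indexOf_lt hik
  have hidxj : (ws (n - 1)).idxOf j = δ₁.length := by
    rw [hπ, List.idxOf_append_of_notMem hjδ, List.idxOf_cons_self]
    omega
  have hidxk : (ws (n - 1)).idxOf k = δ₁.length + 1 := by
    rw [hπ, List.idxOf_append_of_notMem hkδ, List.idxOf_cons_ne _ hjk,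
      List.idxOf_cons_self]
  omega
end
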